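/- arXiv:2211.07054 — 5 statements merged into one kernel-verified Lean document; each statement's English description precedes it below -/
import Mathlib

section
/- The homomorphism H²(G/H, (T')^H) → ∏_{G'} H²(G'/(G'∩H), (T')^{G'∩H}), where the product runs over all cyclic subgroups G' of G and the component at G' is induced by the natural injection G'/(G'∩H) → G/H together with the inclusion (T')^H ⊆ (T')^{G'∩H}, is injective. -/
namespace Normic

/-- For a `Γ`-set `α`, the permutation module of `M`-valued functions on `α`:
`Γ` acts by `(g • f) x = f (g⁻¹ • x)`.  For `M = ℤ` and a finite `Γ`-set `α` this is
the permutation lattice `ℤ[α]`. -/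
instance funAction (Γ α M : Type*) [Group Γ] [MulAction Γ α] [AddCommGroup M] :
    DistribMulAction Γ (α → M) where
  smul g f := fun x => f (g⁻¹ • x)
  one_smul f := by funext x; show f _ = f x; rw [inv_one, one_smul]
  mul_smul g h f := by funext x; show f _ = f _; rw [mul_inv_rev, mul_smul]
  smul_zero g := rfl
  smul_add g f₁ f₂ := rfl

lemma funAction_smul_apply {Γ α M : Type*} [Group Γ] [MulAction Γ α] [AddCommGroup M]
    (g : Γ) (f : α → M) (x : α) : (g • f) x = f (g⁻¹ • x) := rfl

section Cocycles

variable {Γ : Type*} [Group Γ] {M : Type*} [AddCommGroup M] [DistribMulAction Γ M]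

/-- Inhomogeneous 1-cocycles of `Γ` with values in `M`. -/
def IsOneCocycle (f : Γ → M) : Prop := ∀ g h : Γ, f (g * h) = g • f h + f g

/-- 1-coboundaries of `Γ` with values in `M`. -/
def IsOneCoboundary (f : Γ → M) : Prop := ∃ m : M, ∀ g : Γ, f g = g • m - m

/-- Inhomogeneous 2-cocycles of `Γ` with values in `M`. -/
def IsTwoCocycle (f : Γ → Γ → M) : Prop :=
  ∀ g h k : Γ, g • f h k - f (g * h) k + f g (h * k) - f g h = 0

/-- 2-coboundaries of `Γ` with values in `M`. -/
def IsTwoCoboundary (f : Γ → Γ → M) : Prop :=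
  ∃ a : Γ → M, ∀ g h : Γ, f g h = g • a h - a (g * h) + a g

end Cocycles

section Fixed

variable {Γ : Type*} [Group Γ] (N : Subgroup Γ)
variable (M : Type*) [AddCommGroup M] [DistribMulAction Γ M]

/-- The subgroup `M^N` of elements of `M` fixed by a subgroup `N` of `Γ`. -/
def fixedBy : AddSubgroup M where
  carrier := {m | ∀ γ ∈ N, γ • m = m}
  zero_mem' := fun γ _ => smul_zero γ
  add_mem' := by
    intro a b ha hb γ hγ
    rw [smul_add, ha γ hγ, hb γ hγ]
  neg_mem' := by
    intro a ha γ hγ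
    rw [smul_neg, ha γ hγ]

variable [N.Normal]

/-- When `N` is normal in `Γ`, the quotient `Γ/N` acts on the fixed points `M^N`. -/
instance fixedBySMul : SMul (Γ ⧸ N) (fixedBy N M) :=
  ⟨fun q m =>
    Quotient.liftOn' q
      (fun γ => (⟨γ • (m : M), by
        intro h hh
        have hconj : γ⁻¹ * h * γ ∈ N := by
          have := Subgroup.Normal.conj_mem ‹N.Normal› h hh γ⁻¹
          simpa using this
        calc h • γ • (m : M) = (h * γ) • (m : M) := (mul_smul _ _ _).symm
        _ = (γ * (γ⁻¹ * h * γ)) • (m : M) := by group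
        _ = γ • ((γ⁻¹ * h * γ) • (m : M)) := mul_smul _ _ _
        _ = γ • (m : M) := by rw [m.2 _ hconj]⟩ : fixedBy N M))
      (by
        intro γ γ' hrel
        have h : γ⁻¹ * γ' ∈ N := QuotientGroup.leftRel_apply.mp hrel
        apply Subtype.ext
        show γ • (m : M) = γ' • (m : M)
        calc γ • (m : M) = γ • ((γ⁻¹ * γ') • (m : M)) := by rw [m.2 _ h]
        _ = (γ * (γ⁻¹ * γ')) • (m : M) := (mul_smul _ _ _).symm
        _ = γ' • (m : M) := by group)⟩

lemma fixedBy_mk_smul (γ : Γ) (m : fixedBy N M) :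
    (((QuotientGroup.mk γ : Γ ⧸ N) • m : fixedBy N M) : M) = γ • (m : M) := rfl

/-- The induced action of the quotient group `Γ/N` on the fixed points `M^N`. -/
instance fixedByAction : DistribMulAction (Γ ⧸ N) (fixedBy N M) where
  one_smul m := by
    apply Subtype.ext
    show (1 : Γ) • (m : M) = (m : M)
    rw [one_smul]
  mul_smul q q' m := by
    induction q using QuotientGroup.induction_on with
    | H γ =>
    induction q' using QuotientGroup.induction_on with
    | H γ' =>
    apply Subtype.ext
    show (γ * γ') • (m : M) = γ • γ' • (m : M)
    rw [mul_smul]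
  smul_zero q := by
    induction q using QuotientGroup.induction_on with
    | H γ =>
    apply Subtype.ext
    show γ • (0 : M) = (0 : M)
    rw [smul_zero]
  smul_add q m m' := by
    induction q using QuotientGroup.induction_on with
    | H γ =>
    apply Subtype.ext
    show γ • ((m : M) + (m' : M)) = γ • (m : M) + γ • (m' : M)
    rw [smul_add]

end Fixed

section ContextA

variable (G : Type*) [Group G] [Fintype G] [DecidableEq G] (H : Subgroup G) (l : ℕ)

/-- `e' = gcd(n, m)`, where `n = #G` and `m = l·[G:H]` is the degree of `P(t)`. -/
noncomputable def ePrime : ℕ := Nat.gcd (Fintype.card G) (l * H.index)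

/-- The `G`-set `Ω` of all subsets of `Z_K = G` of cardinality `e'`, with `G` acting by
left translation of subsets. -/
def Om : Type _ := {s : Finset G // s.card = ePrime G H l}

instance : MulAction G (Om G H l) where
  smul g s := ⟨s.1.image (g * ·), by
    rw [Finset.card_image_of_injective _ (mul_right_injective g)]; exact s.2⟩
  one_smul s := Subtype.ext (by
    show Finset.image ((1 : G) * ·) s.1 = s.1
    simp)
  mul_smul g h s := Subtype.ext (by
    show Finset.image _ _ = Finset.image _ (Finset.image _ _)
    rw [Finset.image_image]
    exact Finset.image_congr (fun x _ => by simp [Function.comp, mul_assoc]))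

/-- The `G`-lattice `D' = (ℤ[G/H] ⊗ ℤ[G]) ⊕ ℤ[G] ⊕ ℤ[Ω]`, realized concretely as
integer-valued functions (`ℤ[G/H] ⊗ ℤ[G]` is the permutation lattice on `G/H × G`, with
the diagonal `G`-action on the tensor factor). -/
abbrev Dp : Type _ := (((G ⧸ H) × G) → ℤ) × ((G → ℤ) × (Om G H l → ℤ))

/-- The injective `G`-equivariant map `f' : ℤ[G/H] → D'`, sending a coset `τ` to
`(τ ⊗ N_G, −l·N_G, −l·S_K)`, where `N_G = Σ_{g∈G} g` and `S_K = Σ_{M∈Ω} M`. -/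
noncomputable def fp : ((G ⧸ H) → ℤ) →+ Dp G H l :=
  AddMonoidHom.mk' (fun x =>
    (fun p => x p.1,
     fun _ => -(l : ℤ) * ∑ᶠ τ, x τ,
     fun _ => -(l : ℤ) * ∑ᶠ τ, x τ)) (by
    intro x y
    have hsum : ∑ᶠ τ, (x τ + y τ) = (∑ᶠ τ, x τ) + ∑ᶠ τ, y τ :=
      finsum_add_distrib (Set.toFinite _) (Set.toFinite _)
    refine Prod.ext ?_ (Prod.ext ?_ ?_) <;> funext p <;>
      simp [hsum] <;> ring)

lemma fp_apply (x : (G ⧸ H) → ℤ) :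
    fp G H l x =
      (fun p => x p.1,
       fun _ => -(l : ℤ) * ∑ᶠ τ, x τ,
       fun _ => -(l : ℤ) * ∑ᶠ τ, x τ) := rfl

lemma fp_equivariant (g : G) (x : (G ⧸ H) → ℤ) :
    fp G H l (g • x) = g • fp G H l x := by
  have hre : ∑ᶠ τ, x (g⁻¹ • τ) = ∑ᶠ τ, x τ :=
    finsum_eq_of_bijective (fun τ => g⁻¹ • τ) (MulAction.bijective g⁻¹) (fun τ => rfl)
  refine Prod.ext ?_ (Prod.ext ?_ ?_) <;> funext p <;>
    simp only [fp_apply, funAction_smul_apply, Prod.smul_fst, Prod.smul_snd, hre]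

/-- The `G`-lattice `T'`, defined as the cokernel of `f' : ℤ[G/H] → D'`. -/
noncomputable abbrev Tp := Dp G H l ⧸ (fp G H l).range

noncomputable instance : SMul G (Tp G H l) :=
  ⟨fun g => QuotientAddGroup.map _ _ (DistribMulAction.toAddMonoidHom (Dp G H l) g) (by
    rintro _ ⟨x, rfl⟩
    exact ⟨g • x, (fp_equivariant G H l g x)⟩)⟩

lemma Tp_smul_mk (g : G) (d : Dp G H l) :
    g • (QuotientAddGroup.mk d : Tp G H l) = QuotientAddGroup.mk (g • d) := rfl

/-- The `G`-action on the cokernel `T'`. -/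
noncomputable instance : DistribMulAction G (Tp G H l) where
  one_smul x := by
    induction x using QuotientAddGroup.induction_on with
    | H d => rw [Tp_smul_mk, one_smul]
  mul_smul g g' x := by
    induction x using QuotientAddGroup.induction_on with
    | H d => rw [Tp_smul_mk, Tp_smul_mk, Tp_smul_mk, mul_smul]
  smul_zero g :=
    map_zero (QuotientAddGroup.map _ _ (DistribMulAction.toAddMonoidHom (Dp G H l) g) _)
  smul_add g x y :=
    map_add (QuotientAddGroup.map _ _ (DistribMulAction.toAddMonoidHom (Dp G H l) g) _) x y

end ContextA

section Stmt1

variable {G : Type*} [Group G] [Fintype G] [DecidableEq G] (H : Subgroup G) (l : ℕ)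

/-- If `H` is normal in `G` and `G'` is any subgroup, then `H' = G' ∩ H` is a normal
subgroup of `G'`. -/
instance inf_subgroupOf_normal [H.Normal] (G' : Subgroup G) :
    ((G' ⊓ H).subgroupOf G').Normal where
  conj_mem := by
    intro x hx g
    rw [Subgroup.mem_subgroupOf] at hx ⊢
    rcases Subgroup.mem_inf.mp hx with ⟨hx1, hx2⟩
    refine Subgroup.mem_inf.mpr ⟨?_, ?_⟩
    · exact (g * x * g⁻¹).2
    · have : ((g : G) * (x : G) * (g : G)⁻¹) ∈ H := ‹H.Normal›.conj_mem _ hx2 (g : G)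
      simpa using this

/-- The natural injection `G'/(G' ∩ H) → G/H` induced by the inclusion `G' ⊆ G`. -/
noncomputable def quotMap [H.Normal] (G' : Subgroup G) :
    (↥G' ⧸ (G' ⊓ H).subgroupOf G') →* G ⧸ H :=
  QuotientGroup.map _ _ G'.subtype (by
    intro x hx
    rw [Subgroup.mem_subgroupOf] at hx
    exact Subgroup.mem_comap.mpr (Subgroup.mem_inf.mp hx).2)

/-- The inclusion `(T')^H ⊆ (T')^{G' ∩ H}` of fixed points. -/
def fixedInc (G' : Subgroup G) (x : fixedBy H (Tp G H l)) :
    fixedBy ((G' ⊓ H).subgroupOf G') (Tp G H l) :=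
  ⟨(x : Tp G H l), by
    intro γ hγ
    rw [Subgroup.mem_subgroupOf] at hγ
    rw [Subgroup.smul_def]
    exact x.2 _ (Subgroup.mem_inf.mp hγ).2⟩

end Stmt1

section Generic

variable {Γ : Type*} [Group Γ] {M : Type*} [AddCommGroup M] [DistribMulAction Γ M]

/-- The inhomogeneous differential of a 1-cochain. -/
def dOne (B : Γ → M) (x y : Γ) : M := x • B y - B (x*y) + B x

/-- The inhomogeneous differential of a 2-cochain. -/
def dTwo (F : Γ → Γ → M) (x y z : Γ) : M := x • F y z - F (x*y) z + F x (y*z) - F x y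

lemma dOne_sq (B : Γ → M) (a b c : Γ) : dTwo (dOne B) a b c = 0 := by
  simp only [dTwo, dOne, smul_sub, smul_add, mul_smul, mul_assoc]
  abel

lemma dTwo_sq (F : Γ → Γ → M) (a b c d : Γ) :
    a • dTwo F b c d - dTwo F (a*b) c d + dTwo F a (b*c) d - dTwo F a b (c*d) + dTwo F a b c
      = 0 := by
  simp only [dTwo, smul_sub, smul_add, mul_smul, mul_assoc]
  abel

lemma four_term_regroup {M : Type*} [AddCommGroup M] (a1 b1 a2 b2 a3 b3 a4 b4 : M)
    (h1 : a1 - a2 + a3 - a4 = 0) (h2 : b1 - b2 + b3 - b4 = 0) :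
    (a1 - b1) - (a2 - b2) + (a3 - b3) - (a4 - b4) = 0 := by
  have h3 : (a1 - b1) - (a2 - b2) + (a3 - b3) - (a4 - b4)
      = (a1 - a2 + a3 - a4) - (b1 - b2 + b3 - b4) := by abel
  rw [h3, h1, h2, sub_zero]

lemma homotopy_deg3 {A : Type*} [AddCommGroup A] (W : Γ → Γ → Γ → Γ → A)
    (hW : ∀ a b c d x : Γ,
      W b c d (a⁻¹ * x) - W (a*b) c d x + W a (b*c) d x - W a b (c*d) x + W a b c x = 0) :
    ∃ η : Γ → Γ → Γ → A, ∀ g1 g2 g3 x : Γ,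
      W g1 g2 g3 x = η g2 g3 (g1⁻¹ * x) - η (g1*g2) g3 x + η g1 (g2*g3) x - η g1 g2 x := by
  refine ⟨fun b c x => W x⁻¹ b c 1, fun g1 g2 g3 x => ?_⟩
  show W g1 g2 g3 x =
    W (g1⁻¹ * x)⁻¹ g2 g3 1 - W x⁻¹ (g1*g2) g3 1 + W x⁻¹ g1 (g2*g3) 1 - W x⁻¹ g1 g2 1
  have h := hW x⁻¹ g1 g2 g3 1
  simp only [inv_inv, mul_one] at h
  have e1 : (g1⁻¹ * x)⁻¹ = x⁻¹ * g1 := by group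
  rw [e1, ← sub_eq_zero, ← h]
  abel

lemma homotopy_deg2 {Γ' : Type*} [Group Γ'] {A : Type*} [AddCommGroup A]
    (j : Γ' →* Γ) (hj : Function.Injective j) (V : Γ' → Γ' → Γ → A)
    (hV : ∀ (a b c : Γ') (x : Γ),
      V b c ((j a)⁻¹ * x) - V (a*b) c x + V a (b*c) x - V a b x = 0) :
    ∃ ξ : Γ' → Γ → A, ∀ (a b : Γ') (x : Γ),
      V a b x = ξ b ((j a)⁻¹ * x) - ξ (a*b) x + ξ a x := by
  classical
  let s : Setoid Γ :=
    ⟨fun x y => ∃ c : Γ', j c * x = y,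
      ⟨fun x => ⟨1, by simp⟩,
       fun {x y} h => by obtain ⟨c, hc⟩ := h; exact ⟨c⁻¹, by rw [← hc, map_inv]; group⟩,
       fun {x y z} h h' => by
        obtain ⟨c, hc⟩ := h; obtain ⟨d, hd⟩ := h'
        exact ⟨d*c, by rw [map_mul, mul_assoc, hc, hd]⟩⟩⟩
  let r : Γ → Γ := fun x => (Quotient.mk s x).out
  have hr : ∀ x, ∃ c : Γ', j c * r x = x := fun x => Quotient.exact (Quotient.out_eq (Quotient.mk s x))
  choose τ hτ using hr
  have hrT : ∀ (c : Γ') (x : Γ), r (j c * x) = r x := by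
    intro c x
    show (Quotient.mk s (j c * x)).out = (Quotient.mk s x).out
    congr 1
    exact Quotient.sound ⟨c⁻¹, by rw [map_inv]; group⟩
  have huniq : ∀ (c c' : Γ') (z : Γ), j c * z = j c' * z → c = c' := by
    intro c c' z h
    exact hj (mul_right_cancel h)
  have hτT : ∀ (c : Γ') (x : Γ), τ (j c * x) = c * τ x := by
    intro c x
    refine huniq _ _ (r x) ?_
    rw [map_mul, mul_assoc, hτ x]
    have := hτ (j c * x)
    rwa [hrT] at this
  refine ⟨fun c x => V (τ x)⁻¹ c (r x), fun a b x => ?_⟩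
  have h1 : τ ((j a)⁻¹ * x) = a⁻¹ * τ x := by
    have := hτT a⁻¹ x
    rwa [map_inv] at this
  have h2 : r ((j a)⁻¹ * x) = r x := by
    have := hrT a⁻¹ x
    rwa [map_inv] at this
  beta_reduce
  rw [h1, h2, mul_inv_rev, inv_inv]
  have h := hV (τ x)⁻¹ a b (r x)
  rw [map_inv, inv_inv, hτ x] at h
  rw [← sub_eq_zero, ← h]
  abel

lemma average_two {Γ₀ : Type*} [Group Γ₀] [Fintype Γ₀] {Y : Type*}
    (act : Γ₀ → Y → Y) (FF : Γ₀ → Γ₀ → Y → ℚ)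
    (hco : ∀ (a b c : Γ₀) (y : Y),
      FF b c (act a y) - FF (a*b) c y + FF a (b*c) y - FF a b y = 0) :
    ∃ bb : Γ₀ → Y → ℚ,
      (∀ a b y, FF a b y = bb b (act a y) - bb (a*b) y + bb a y) ∧
      (∀ T : Y → Y, (∀ a b y, FF a b (T y) = FF a b y) → ∀ a y, bb a (T y) = bb a y) := by
  classical
  set n : ℚ := (Fintype.card Γ₀ : ℚ) with hn
  have hn0 : n ≠ 0 := by
    simp only [hn, ne_eq, Nat.cast_eq_zero]
    exact Fintype.card_ne_zero
  refine ⟨fun γ y => (∑ c : Γ₀, FF γ c y) / n, fun a b y => ?_,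
    fun T hT a y => by simp only [hT]⟩
  have hsum : (∑ c : Γ₀, (FF b c (act a y) - FF (a*b) c y + FF a (b*c) y - FF a b y)) = 0 :=
    Finset.sum_eq_zero fun c _ => hco a b c y
  have h3 : (∑ c : Γ₀, FF a (b*c) y) = ∑ c : Γ₀, FF a c y :=
    Equiv.sum_comp (Equiv.mulLeft b) (fun c => FF a c y)
  have h4 : (∑ _c : Γ₀, FF a b y) = n * FF a b y := by
    rw [Finset.sum_const, Finset.card_univ, nsmul_eq_mul, hn]
  beta_reduce
  simp only [Finset.sum_add_distrib, Finset.sum_sub_distrib, h3, h4] at hsum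
  rw [div_sub_div_same, ← add_div, eq_comm, div_eq_iff hn0]
  linarith

lemma average_one {Γ₀ : Type*} [Group Γ₀] [Fintype Γ₀] {Y : Type*}
    (act : Γ₀ → Y → Y) (vv : Γ₀ → Y → ℚ)
    (hco : ∀ (a b : Γ₀) (y : Y), vv (a*b) y = vv b (act a y) + vv a y) :
    ∃ p : Y → ℚ, (∀ a y, vv a y = p (act a y) - p y) ∧
      (∀ T : Y → Y, (∀ b y, vv b (T y) = vv b y) → ∀ y, p (T y) = p y) := by
  classical
  set n : ℚ := (Fintype.card Γ₀ : ℚ) with hn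
  have hn0 : n ≠ 0 := by
    simp only [hn, ne_eq, Nat.cast_eq_zero]
    exact Fintype.card_ne_zero
  refine ⟨fun y => -(∑ b : Γ₀, vv b y) / n, fun a y => ?_, fun T hT y => by simp only [hT]⟩
  have hsum : (∑ b : Γ₀, vv (a*b) y) = ∑ b : Γ₀, (vv b (act a y) + vv a y) :=
    Finset.sum_congr rfl fun b _ => hco a b y
  have h1 : (∑ b : Γ₀, vv (a*b) y) = ∑ b : Γ₀, vv b y :=
    Equiv.sum_comp (Equiv.mulLeft a) (fun b => vv b y)
  have h2 : (∑ _b : Γ₀, vv a y) = n * vv a y := by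
    rw [Finset.sum_const, Finset.card_univ, nsmul_eq_mul, hn]
  beta_reduce
  rw [h1, Finset.sum_add_distrib, h2] at hsum
  rw [div_sub_div_same, eq_comm, div_eq_iff hn0]
  linarith

end Generic


lemma key_detect {G : Type*} [Group G] (H : Subgroup G) [H.Normal]
    {Y : Type*} [MulAction G Y] {A : Type*} [AddCommGroup A]
    (u : G ⧸ H → Y → A)
    (hufix : ∀ (γ : G ⧸ H) (h : G), h ∈ H → ∀ y : Y, u γ (h • y) = u γ y)
    (huco : ∀ (g g' : G) (y : Y),
      u ((g : G ⧸ H) * (g' : G ⧸ H)) y = u (g' : G ⧸ H) (g⁻¹ • y) + u (g : G ⧸ H) y)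
    (hupt : ∀ (g : G) (y : Y), g • y = y → u (g : G ⧸ H) y = 0) :
    ∃ m : Y → A, (∀ (h : G), h ∈ H → ∀ y, m (h • y) = m y) ∧
      (∀ (g : G) (y : Y), u (g : G ⧸ H) y = m (g⁻¹ • y) - m y) := by
  classical
  let rep : Y → Y := fun y => (Quotient.mk (MulAction.orbitRel G Y) y).out
  have hrep_ex : ∀ y : Y, ∃ g : G, g • rep y = y := by
    intro y
    have h : rep y ∈ MulAction.orbit G y :=
      MulAction.orbitRel_apply.mp
        (Quotient.exact (Quotient.out_eq (Quotient.mk (MulAction.orbitRel G Y) y)))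
    obtain ⟨g, hg⟩ := h
    exact ⟨g⁻¹, by rw [← hg]; simp⟩
  have hrep_eq : ∀ (g : G) (y : Y), rep (g • y) = rep y := by
    intro g y
    show (Quotient.mk (MulAction.orbitRel G Y) (g • y)).out
        = (Quotient.mk (MulAction.orbitRel G Y) y).out
    congr 1
    exact Quotient.sound (MulAction.orbitRel_apply.mpr ⟨g, rfl⟩)
  choose ch hch using hrep_ex
  have welldef : ∀ (z w : Y) (g g' : G), g • w = z → g' • w = z →
      u (g : G ⧸ H) z = u (g' : G ⧸ H) z := by
    intro z w g g' hg hg'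
    have e2 : g'⁻¹ • z = w := by rw [← hg']; exact inv_smul_smul g' w
    have hδ : (g'⁻¹ * g) • w = w := by rw [mul_smul, hg, e2]
    have h0 : u ((g'⁻¹ * g : G) : G ⧸ H) w = 0 := hupt _ _ hδ
    have h1 := huco g' (g'⁻¹ * g) z
    rw [← QuotientGroup.mk_mul] at h1
    have e : g' * (g'⁻¹ * g) = g := by group
    rw [e] at h1
    rw [h1, e2, h0, zero_add]
  refine ⟨fun y => - u ((ch y : G) : G ⧸ H) y, ?_, ?_⟩
  · intro h hh y
    have h1 : ch (h • y) • rep y = h • y := by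
      have := hch (h • y); rwa [hrep_eq h y] at this
    have h2 : (h * ch y) • rep y = h • y := by rw [mul_smul, hch y]
    have h3 := welldef (h • y) (rep y) (ch (h • y)) (h * ch y) h1 h2
    have h4 : ((h * ch y : G) : G ⧸ H) = ((ch y : G) : G ⧸ H) := by
      rw [QuotientGroup.mk_mul, (QuotientGroup.eq_one_iff h).mpr hh, one_mul]
    beta_reduce
    rw [h3, h4, hufix _ h hh y]
  · intro g y
    have h1 : ch (g⁻¹ • y) • rep y = g⁻¹ • y := by
      have := hch (g⁻¹ • y); rwa [hrep_eq g⁻¹ y] at this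
    have h2 : (g⁻¹ * ch y) • rep y = g⁻¹ • y := by rw [mul_smul, hch y]
    have h3 := welldef (g⁻¹ • y) (rep y) (ch (g⁻¹ • y)) (g⁻¹ * ch y) h1 h2
    have h4 := huco g (g⁻¹ * ch y) y
    rw [← QuotientGroup.mk_mul] at h4
    have e : g * (g⁻¹ * ch y) = ch y := by group
    rw [e] at h4
    beta_reduce
    rw [h3, h4]
    abel



section Infra

variable (G : Type) [Group G] [Fintype G] [DecidableEq G] (H : Subgroup G) [H.Normal] (l : ℕ)

/-- The `G`-set underlying `D'`. -/
abbrev Ys : Type _ := ((G ⧸ H) × G) ⊕ (G ⊕ Om G H l)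

/-- View an element of `D'` as an integer valued function on `Ys`. -/
def toY (d : Dp G H l) : Ys G H l → ℤ := Sum.elim d.1 (Sum.elim d.2.1 d.2.2)

/-- Reassemble an element of `D'` from a function on `Ys`. -/
def fromY (u : Ys G H l → ℤ) : Dp G H l :=
  (fun p => u (.inl p), fun g => u (.inr (.inl g)), fun o => u (.inr (.inr o)))

lemma toY_fromY (u : Ys G H l → ℤ) : toY G H l (fromY G H l u) = u := by
  funext y; rcases y with p | (g | o) <;> rfl

lemma toY_injective : Function.Injective (toY G H l) := by
  intro a b hab
  refine Prod.ext ?_ (Prod.ext ?_ ?_)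
  · funext p; exact congrFun hab (.inl p)
  · funext g; exact congrFun hab (.inr (.inl g))
  · funext o; exact congrFun hab (.inr (.inr o))

lemma toY_sub (d e : Dp G H l) (y : Ys G H l) :
    toY G H l (d - e) y = toY G H l d y - toY G H l e y := by
  rcases y with p | (g | o) <;> rfl

lemma toY_add (d e : Dp G H l) (y : Ys G H l) :
    toY G H l (d + e) y = toY G H l d y + toY G H l e y := by
  rcases y with p | (g | o) <;> rfl

lemma toY_zero (y : Ys G H l) : toY G H l 0 y = 0 := by
  rcases y with p | (g | o) <;> rfl

lemma toY_smul (g : G) (d : Dp G H l) (y : Ys G H l) :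
    toY G H l (g • d) y = toY G H l d (g⁻¹ • y) := by
  rcases y with p | (a | o) <;> rfl

lemma coset_smul_eq (g : G) (τ : G ⧸ H) : g • τ = (g : G ⧸ H) * τ := by
  induction τ using QuotientGroup.induction_on with
  | H a => exact (QuotientGroup.mk_mul H g a).symm

lemma coset_smul_trivial {h : G} (hh : h ∈ H) (τ : G ⧸ H) : h • τ = τ := by
  induction τ using QuotientGroup.induction_on with
  | H a =>
    show ((h * a : G) : G ⧸ H) = (a : G ⧸ H)
    rw [QuotientGroup.eq]
    have h2 := ‹H.Normal›.conj_mem h⁻¹ (inv_mem hh) a⁻¹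
    simpa [mul_assoc] using h2

lemma fun_smul_trivial {h : G} (hh : h ∈ H) (v : (G ⧸ H) → ℤ) : h • v = v := by
  funext τ
  rw [funAction_smul_apply, coset_smul_trivial G H (inv_mem hh)]

lemma fp_fst (v : (G ⧸ H) → ℤ) (p : (G ⧸ H) × G) : (fp G H l v).1 p = v p.1 := rfl

lemma fp_injective : Function.Injective (fp G H l) := by
  intro a b hab
  funext τ
  exact congrFun (congrArg Prod.fst hab) (τ, 1)

lemma fp_shift (g : G) (v : (G ⧸ H) → ℤ) :
    fp G H l (fun τ => v ((g : G ⧸ H)⁻¹ * τ)) = g • fp G H l v := by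
  have h : (fun τ => v ((g : G ⧸ H)⁻¹ * τ)) = g • v := by
    funext τ
    rw [funAction_smul_apply, coset_smul_eq, QuotientGroup.mk_inv]
  rw [h, fp_equivariant]

lemma fp_Hfix {h : G} (hh : h ∈ H) (v : (G ⧸ H) → ℤ) :
    h • fp G H l v = fp G H l v := by
  rw [← fp_equivariant, fun_smul_trivial G H hh]

lemma fixedInc_coe (G' : Subgroup G) (x : fixedBy H (Tp G H l)) :
    ((fixedInc H l G' x : fixedBy ((G' ⊓ H).subgroupOf G') (Tp G H l)) : Tp G H l)
      = (x : Tp G H l) := rfl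

/-- Any preimage in `D'` of an `H`-fixed element of `T'` is itself `H`-fixed. -/
lemma lift_fixed {h : G} (hh : h ∈ H) (d : Dp G H l)
    (hd : (QuotientAddGroup.mk (h • d) : Tp G H l) = QuotientAddGroup.mk d) :
    h • d = d := by
  have hmem : h • d - d ∈ (fp G H l).range := by
    rw [← QuotientAddGroup.eq_zero_iff]
    show (QuotientAddGroup.mk (h • d - d) : Tp G H l) = 0
    rw [QuotientAddGroup.mk_sub, hd, sub_self]
  obtain ⟨v, hv⟩ := AddMonoidHom.mem_range.mp hmem
  have hv0 : v = 0 := by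
    funext τ
    have hval : ∀ g0 : G, v τ = d.1 (τ, h⁻¹ * g0) - d.1 (τ, g0) := by
      intro g0
      have h1 := congrFun (congrArg Prod.fst hv) (τ, g0)
      rw [fp_fst] at h1
      have h2 : (h • d - d).1 (τ, g0) = d.1 (h⁻¹ • τ, h⁻¹ * g0) - d.1 (τ, g0) := rfl
      rw [coset_smul_trivial G H (inv_mem hh)] at h2
      rw [h1, h2]
    have hsum : (∑ _g0 : G, v τ) = ∑ g0 : G, (d.1 (τ, h⁻¹ * g0) - d.1 (τ, g0)) :=
      Finset.sum_congr rfl (fun g0 _ => hval g0)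
    have h3 : (∑ g0 : G, d.1 (τ, h⁻¹ * g0)) = ∑ g0 : G, d.1 (τ, g0) :=
      Equiv.sum_comp (Equiv.mulLeft h⁻¹) (fun g0 => d.1 (τ, g0))
    rw [Finset.sum_sub_distrib, h3, sub_self, Finset.sum_const, Finset.card_univ] at hsum
    have h4 : (Fintype.card G : ℤ) * v τ = 0 := by
      rw [← nsmul_eq_mul]
      exact_mod_cast hsum
    rcases mul_eq_zero.mp h4 with h5 | h5
    · exact absurd (Nat.cast_eq_zero.mp h5) Fintype.card_ne_zero
    · exact h5
  rw [hv0, map_zero] at hv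
  exact sub_eq_zero.mp hv.symm

end Infra

section RatMod

/-- The subgroup `ℤ ⊆ ℚ`. -/
def ZQ : AddSubgroup ℚ := (Int.castAddHom ℚ).range

/-- The group `ℚ/ℤ`. -/
abbrev QZmod : Type := ℚ ⧸ ZQ

/-- The projection `ℚ → ℚ/ℤ`. -/
def qQ : ℚ →+ QZmod := QuotientAddGroup.mk' ZQ

lemma qQ_int (k : ℤ) : qQ ((k : ℚ)) = 0 :=
  (QuotientAddGroup.eq_zero_iff _).mpr ⟨k, rfl⟩

lemma qQ_eq_zero {x : ℚ} (hx : qQ x = 0) : ∃ k : ℤ, (k : ℚ) = x := by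
  obtain ⟨k, hk⟩ := (QuotientAddGroup.eq_zero_iff _).mp hx
  exact ⟨k, hk⟩

lemma qQ_out (t : QZmod) : qQ (Quotient.out t) = t := QuotientAddGroup.out_eq' t

end RatMod

set_option maxHeartbeats 4000000 in
/-- With `G` a finite group of order `n`, `H` a normal subgroup, `l > 0`,
`e' = gcd(n, l·[G:H])`, `n ∤ l·[G:H]`, and `T' = coker(f' : ℤ[G/H] → D')`: the
homomorphism `H²(G/H, (T')^H) → ∏_{G'} H²(G'/(G'∩H), (T')^{G'∩H})`, the product running
over all cyclic subgroups `G'` of `G`, with components induced by the natural injections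
`G'/(G'∩H) → G/H` and the inclusions `(T')^H ⊆ (T')^{G'∩H}`, is injective.  (Expressed
at the level of cocycles: every 2-cocycle of `G/H` with values in `(T')^H` whose image
cocycle is a 2-coboundary for every cyclic subgroup `G'` is itself a 2-coboundary.) -/
theorem stmt1 (G : Type) [Group G] [Fintype G] [DecidableEq G]
    (H : Subgroup G) [H.Normal] (l : ℕ) (hl : 0 < l)
    (hndvd : ¬ (Fintype.card G ∣ l * H.index))
    (f : (G ⧸ H) → (G ⧸ H) → fixedBy H (Tp G H l))
    (hf : IsTwoCocycle f)
    (hres : ∀ G' : Subgroup G, IsCyclic ↥G' →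
      IsTwoCoboundary (fun a b : ↥G' ⧸ (G' ⊓ H).subgroupOf G' =>
        fixedInc H l G' (f (quotMap H G' a) (quotMap H G' b)))) :
    IsTwoCoboundary f := by
  classical
  haveI : Fintype (G ⧸ H) := Fintype.ofFinite _
  -- Step A : choose a set-theoretic lift of f to D'
  obtain ⟨F0, hF0⟩ : ∃ F0 : (G ⧸ H) → (G ⧸ H) → Dp G H l,
      ∀ γ δ, (QuotientAddGroup.mk (F0 γ δ) : Tp G H l) = (f γ δ : Tp G H l) := by
    choose F0 hF0 using fun γ δ : G ⧸ H =>
      QuotientAddGroup.mk_surjective ((f γ δ : Tp G H l))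
    exact ⟨F0, hF0⟩
  have hF0fix : ∀ (γ δ : G ⧸ H) (h : G), h ∈ H → h • F0 γ δ = F0 γ δ := by
    intro γ δ h hh
    refine lift_fixed G H l hh _ ?_
    rw [← Tp_smul_mk, hF0, (f γ δ).2 h hh]
  -- the coerced cocycle identity for f
  have hfG : ∀ a b c : G,
      a • (f (b : G ⧸ H) (c : G ⧸ H) : Tp G H l)
        - (f ((a*b : G) : G ⧸ H) (c : G ⧸ H) : Tp G H l)
        + (f (a : G ⧸ H) ((b*c : G) : G ⧸ H) : Tp G H l)
        - (f (a : G ⧸ H) (b : G ⧸ H) : Tp G H l) = 0 := by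
    intro a b c
    have h := hf (a : G ⧸ H) (b : G ⧸ H) (c : G ⧸ H)
    have h2 := congrArg (fun x : fixedBy H (Tp G H l) => (x : Tp G H l)) h
    simp only [AddSubgroup.coe_add, AddSubgroup.coe_sub, ZeroMemClass.coe_zero,
      fixedBy_mk_smul, ← QuotientGroup.mk_mul] at h2
    exact h2
  -- Step B : make the lift into a genuine cocycle using an explicit homotopy
  have hωmem : ∀ a b c : G,
      dTwo (fun x y : G => F0 (x : G ⧸ H) (y : G ⧸ H)) a b c ∈ (fp G H l).range := by
    intro a b c
    rw [← QuotientAddGroup.eq_zero_iff]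
    show (QuotientAddGroup.mk (a • F0 (b : G ⧸ H) (c : G ⧸ H)
        - F0 ((a*b : G) : G ⧸ H) (c : G ⧸ H)
        + F0 (a : G ⧸ H) ((b*c : G) : G ⧸ H) - F0 (a : G ⧸ H) (b : G ⧸ H)) : Tp G H l) = 0
    simp only [QuotientAddGroup.mk_sub, QuotientAddGroup.mk_add, ← Tp_smul_mk, hF0]
    exact hfG a b c
  choose Wg hWg using fun a b c => AddMonoidHom.mem_range.mp (hωmem a b c)
  have hsmul_congr : ∀ (x x' : G) (d : Dp G H l), (x : G ⧸ H) = (x' : G ⧸ H) →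
      (∀ h : G, h ∈ H → h • d = d) → x • d = x' • d := by
    intro x x' d hx hfixd
    have h1 : x⁻¹ * x' ∈ H := QuotientGroup.eq.mp hx
    have h2 : x' = x * (x⁻¹ * x') := by group
    rw [h2, mul_smul, hfixd _ h1]
  have hωcongr : ∀ a b c a' b' c' : G, (a : G ⧸ H) = (a' : G ⧸ H) →
      (b : G ⧸ H) = (b' : G ⧸ H) → (c : G ⧸ H) = (c' : G ⧸ H) →
      dTwo (fun x y : G => F0 (x : G ⧸ H) (y : G ⧸ H)) a b c
        = dTwo (fun x y : G => F0 (x : G ⧸ H) (y : G ⧸ H)) a' b' c' := by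
    intro a b c a' b' c' ha hb hc
    have hab : ((a*b : G) : G ⧸ H) = ((a'*b' : G) : G ⧸ H) := by
      rw [QuotientGroup.mk_mul, QuotientGroup.mk_mul, ha, hb]
    have hbc : ((b*c : G) : G ⧸ H) = ((b'*c' : G) : G ⧸ H) := by
      rw [QuotientGroup.mk_mul, QuotientGroup.mk_mul, hb, hc]
    show a • F0 (b : G ⧸ H) (c : G ⧸ H) - F0 ((a*b : G) : G ⧸ H) (c : G ⧸ H)
        + F0 (a : G ⧸ H) ((b*c : G) : G ⧸ H) - F0 (a : G ⧸ H) (b : G ⧸ H)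
        = a' • F0 (b' : G ⧸ H) (c' : G ⧸ H) - F0 ((a'*b' : G) : G ⧸ H) (c' : G ⧸ H)
        + F0 (a' : G ⧸ H) ((b'*c' : G) : G ⧸ H) - F0 (a' : G ⧸ H) (b' : G ⧸ H)
    rw [hsmul_congr a a' _ ha (fun h hh => hF0fix _ _ h hh), ha, hb, hc, hab, hbc]
  set WΓ : (G ⧸ H) → (G ⧸ H) → (G ⧸ H) → (G ⧸ H) → ℤ :=
    fun x y z => Wg x.out y.out z.out with hWΓd
  have hWΓ : ∀ a b c : G, fp G H l (WΓ (a : G ⧸ H) (b : G ⧸ H) (c : G ⧸ H))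
      = dTwo (fun x y : G => F0 (x : G ⧸ H) (y : G ⧸ H)) a b c := by
    intro a b c
    show fp G H l (Wg ((a : G ⧸ H)).out ((b : G ⧸ H)).out ((c : G ⧸ H)).out) = _
    rw [hWg]
    exact hωcongr _ _ _ _ _ _ (QuotientGroup.out_eq' _) (QuotientGroup.out_eq' _)
      (QuotientGroup.out_eq' _)
  have hdW : ∀ x1 x2 x3 x4 t : G ⧸ H,
      WΓ x2 x3 x4 (x1⁻¹ * t) - WΓ (x1*x2) x3 x4 t + WΓ x1 (x2*x3) x4 t - WΓ x1 x2 (x3*x4) t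
        + WΓ x1 x2 x3 t = 0 := by
    intro x1 x2 x3 x4
    obtain ⟨a, rfl⟩ : ∃ a : G, (a : G ⧸ H) = x1 := ⟨x1.out, QuotientGroup.out_eq' x1⟩
    obtain ⟨b, rfl⟩ : ∃ b : G, (b : G ⧸ H) = x2 := ⟨x2.out, QuotientGroup.out_eq' x2⟩
    obtain ⟨c, rfl⟩ : ∃ c : G, (c : G ⧸ H) = x3 := ⟨x3.out, QuotientGroup.out_eq' x3⟩
    obtain ⟨d, rfl⟩ : ∃ d : G, (d : G ⧸ H) = x4 := ⟨x4.out, QuotientGroup.out_eq' x4⟩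
    have hfn : (fun t => WΓ (b : G ⧸ H) (c : G ⧸ H) (d : G ⧸ H) (((a : G ⧸ H))⁻¹ * t))
        - WΓ ((a*b : G) : G ⧸ H) (c : G ⧸ H) (d : G ⧸ H)
        + WΓ (a : G ⧸ H) ((b*c : G) : G ⧸ H) (d : G ⧸ H)
        - WΓ (a : G ⧸ H) (b : G ⧸ H) ((c*d : G) : G ⧸ H)
        + WΓ (a : G ⧸ H) (b : G ⧸ H) (c : G ⧸ H) = 0 := by
      apply fp_injective G H l
      rw [map_zero]
      simp only [map_sub, map_add]
      rw [fp_shift G H l a (WΓ (b : G ⧸ H) (c : G ⧸ H) (d : G ⧸ H)),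
        hWΓ, hWΓ, hWΓ, hWΓ, hWΓ]
      exact dTwo_sq _ a b c d
    intro t
    have h2 := congrFun hfn t
    simpa [← QuotientGroup.mk_mul] using h2
  obtain ⟨η, hη⟩ := homotopy_deg3 WΓ hdW
  set FD : (G ⧸ H) → (G ⧸ H) → Dp G H l := fun γ δ => F0 γ δ - fp G H l (η γ δ) with hFDd
  have hFDmk : ∀ γ δ, (QuotientAddGroup.mk (FD γ δ) : Tp G H l) = (f γ δ : Tp G H l) := by
    intro γ δ
    show (QuotientAddGroup.mk (F0 γ δ - fp G H l (η γ δ)) : Tp G H l) = _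
    rw [QuotientAddGroup.mk_sub, hF0,
      (QuotientAddGroup.eq_zero_iff _).mpr (AddMonoidHom.mem_range.mpr ⟨η γ δ, rfl⟩),
      sub_zero]
  have hFDfix : ∀ (γ δ : G ⧸ H) (h : G), h ∈ H → h • FD γ δ = FD γ δ := by
    intro γ δ h hh
    show h • (F0 γ δ - fp G H l (η γ δ)) = F0 γ δ - fp G H l (η γ δ)
    rw [smul_sub, hF0fix γ δ h hh, fp_Hfix G H l hh]
  have hFDco : ∀ a b c : G,
      a • FD (b : G ⧸ H) (c : G ⧸ H) - FD ((a*b : G) : G ⧸ H) (c : G ⧸ H)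
        + FD (a : G ⧸ H) ((b*c : G) : G ⧸ H) - FD (a : G ⧸ H) (b : G ⧸ H) = 0 := by
    intro a b c
    have hηfp : fp G H l (WΓ (a : G ⧸ H) (b : G ⧸ H) (c : G ⧸ H))
        = a • fp G H l (η (b : G ⧸ H) (c : G ⧸ H))
          - fp G H l (η ((a*b : G) : G ⧸ H) (c : G ⧸ H))
          + fp G H l (η (a : G ⧸ H) ((b*c : G) : G ⧸ H))
          - fp G H l (η (a : G ⧸ H) (b : G ⧸ H)) := by
      rw [← fp_shift, ← map_sub, ← map_add, ← map_sub]
      congr 1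
      funext t
      have h3 := hη (a : G ⧸ H) (b : G ⧸ H) (c : G ⧸ H) t
      simpa [← QuotientGroup.mk_mul] using h3
    have h5 : dTwo (fun x y : G => F0 (x : G ⧸ H) (y : G ⧸ H)) a b c
        = a • F0 (b : G ⧸ H) (c : G ⧸ H) - F0 ((a*b : G) : G ⧸ H) (c : G ⧸ H)
          + F0 (a : G ⧸ H) ((b*c : G) : G ⧸ H) - F0 (a : G ⧸ H) (b : G ⧸ H) := rfl
    have h4 := hWΓ a b c
    rw [hηfp, h5] at h4
    show a • (F0 (b : G ⧸ H) (c : G ⧸ H) - fp G H l (η (b : G ⧸ H) (c : G ⧸ H)))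
        - (F0 ((a*b : G) : G ⧸ H) (c : G ⧸ H) - fp G H l (η ((a*b : G) : G ⧸ H) (c : G ⧸ H)))
        + (F0 (a : G ⧸ H) ((b*c : G) : G ⧸ H) - fp G H l (η (a : G ⧸ H) ((b*c : G) : G ⧸ H)))
        - (F0 (a : G ⧸ H) (b : G ⧸ H) - fp G H l (η (a : G ⧸ H) (b : G ⧸ H))) = 0
    rw [smul_sub]
    rw [show a • F0 (b : G ⧸ H) (c : G ⧸ H) - a • fp G H l (η (b : G ⧸ H) (c : G ⧸ H))
        - (F0 ((a*b : G) : G ⧸ H) (c : G ⧸ H) - fp G H l (η ((a*b : G) : G ⧸ H) (c : G ⧸ H)))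
        + (F0 (a : G ⧸ H) ((b*c : G) : G ⧸ H) - fp G H l (η (a : G ⧸ H) ((b*c : G) : G ⧸ H)))
        - (F0 (a : G ⧸ H) (b : G ⧸ H) - fp G H l (η (a : G ⧸ H) (b : G ⧸ H)))
        = (a • F0 (b : G ⧸ H) (c : G ⧸ H) - F0 ((a*b : G) : G ⧸ H) (c : G ⧸ H)
          + F0 (a : G ⧸ H) ((b*c : G) : G ⧸ H) - F0 (a : G ⧸ H) (b : G ⧸ H))
        - (a • fp G H l (η (b : G ⧸ H) (c : G ⧸ H))
          - fp G H l (η ((a*b : G) : G ⧸ H) (c : G ⧸ H))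
          + fp G H l (η (a : G ⧸ H) ((b*c : G) : G ⧸ H))
          - fp G H l (η (a : G ⧸ H) (b : G ⧸ H))) from by abel]
    rw [← h4, sub_self]
  -- Step C : averaging over ℚ
  have hout : ∀ (x : G ⧸ H) (g : G), (g : G ⧸ H) = x → ∃ h : G, h ∈ H ∧ x.out = g * h := by
    intro x g hg
    refine ⟨g⁻¹ * x.out, ?_, by group⟩
    have h1 : (g : G ⧸ H) = ((x.out : G) : G ⧸ H) := by rw [QuotientGroup.out_eq', hg]
    exact QuotientGroup.eq.mp h1
  set FFQ : (G ⧸ H) → (G ⧸ H) → Ys G H l → ℚ :=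
    fun γ δ y => ((toY G H l (FD γ δ) y : ℤ) : ℚ) with hFFQd
  have hFFQfix : ∀ (γ δ : G ⧸ H) (h : G), h ∈ H → ∀ y, FFQ γ δ (h • y) = FFQ γ δ y := by
    intro γ δ h hh y
    have h1 : toY G H l (h⁻¹ • FD γ δ) y = toY G H l (FD γ δ) (h • y) := by
      rw [toY_smul, inv_inv]
    show ((toY G H l (FD γ δ) (h • y) : ℤ) : ℚ) = ((toY G H l (FD γ δ) y : ℤ) : ℚ)
    rw [← h1, hFDfix γ δ h⁻¹ (inv_mem hh)]
  set actG : (G ⧸ H) → Ys G H l → Ys G H l := fun γ y => (Quotient.out γ)⁻¹ • y with hactd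
  have hFFQact : ∀ (γ δ : G ⧸ H) (g : G) (x : G ⧸ H), (g : G ⧸ H) = x → ∀ y,
      FFQ γ δ (actG x y) = FFQ γ δ (g⁻¹ • y) := by
    intro γ δ g x hg y
    obtain ⟨h, hh, hout'⟩ := hout x g hg
    show FFQ γ δ ((x.out)⁻¹ • y) = _
    rw [hout', mul_inv_rev, mul_smul]
    exact hFFQfix γ δ h⁻¹ (inv_mem hh) _
  have hFFQco : ∀ (x1 x2 x3 : G ⧸ H) (y : Ys G H l),
      FFQ x2 x3 (actG x1 y) - FFQ (x1*x2) x3 y + FFQ x1 (x2*x3) y - FFQ x1 x2 y = 0 := by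
    intro x1 x2 x3 y
    obtain ⟨a, rfl⟩ : ∃ a : G, (a : G ⧸ H) = x1 := ⟨x1.out, QuotientGroup.out_eq' x1⟩
    obtain ⟨b, rfl⟩ : ∃ b : G, (b : G ⧸ H) = x2 := ⟨x2.out, QuotientGroup.out_eq' x2⟩
    obtain ⟨c, rfl⟩ : ∃ c : G, (c : G ⧸ H) = x3 := ⟨x3.out, QuotientGroup.out_eq' x3⟩
    rw [hFFQact (b : G ⧸ H) (c : G ⧸ H) a (a : G ⧸ H) rfl y]
    have h5 := hFDco a b c
    have h6 := congrArg (fun d => ((toY G H l d y : ℤ) : ℚ)) h5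
    simp only [toY_sub, toY_add, toY_smul, toY_zero] at h6
    push_cast at h6
    show FFQ (b : G ⧸ H) (c : G ⧸ H) (a⁻¹ • y)
        - FFQ ((a : G ⧸ H) * (b : G ⧸ H)) (c : G ⧸ H) y
        + FFQ (a : G ⧸ H) ((b : G ⧸ H) * (c : G ⧸ H)) y - FFQ (a : G ⧸ H) (b : G ⧸ H) y = 0
    simp only [hFFQd, ← QuotientGroup.mk_mul]
    push_cast
    linarith [h6]
  obtain ⟨bb, hbbE, hbbT⟩ := average_two actG FFQ hFFQco
  have hbbfix : ∀ (γ : G ⧸ H) (h : G), h ∈ H → ∀ y, bb γ (h • y) = bb γ y := by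
    intro γ h hh y
    exact hbbT (fun y => h • y) (fun a b y => hFFQfix a b h hh y) γ y
  have hbbg : ∀ (a b : G) (y : Ys G H l),
      FFQ (a : G ⧸ H) (b : G ⧸ H) y
        = bb (b : G ⧸ H) (a⁻¹ • y) - bb ((a*b : G) : G ⧸ H) y + bb (a : G ⧸ H) y := by
    intro a b y
    have h1 := hbbE (a : G ⧸ H) (b : G ⧸ H) y
    obtain ⟨h, hh, hout'⟩ := hout (a : G ⧸ H) a rfl
    have h2 : bb (b : G ⧸ H) (actG (a : G ⧸ H) y) = bb (b : G ⧸ H) (a⁻¹ • y) := by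
      show bb _ (((a : G ⧸ H).out)⁻¹ • y) = _
      rw [hout', mul_inv_rev, mul_smul]
      exact hbbfix _ h⁻¹ (inv_mem hh) _
    rw [h1, h2, ← QuotientGroup.mk_mul]
  set u : (G ⧸ H) → Ys G H l → QZmod := fun γ y => qQ (bb γ y) with hud
  have hFFQq : ∀ (γ δ : G ⧸ H) (y : Ys G H l), qQ (FFQ γ δ y) = 0 := by
    intro γ δ y
    exact qQ_int _
  have hufix : ∀ (γ : G ⧸ H) (h : G), h ∈ H → ∀ y, u γ (h • y) = u γ y := by
    intro γ h hh y
    show qQ _ = qQ _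
    rw [hbbfix γ h hh y]
  have huco : ∀ (g g' : G) (y : Ys G H l),
      u ((g : G ⧸ H) * (g' : G ⧸ H)) y = u (g' : G ⧸ H) (g⁻¹ • y) + u (g : G ⧸ H) y := by
    intro g g' y
    have h1 := congrArg qQ (hbbg g g' y)
    rw [map_add, map_sub, hFFQq] at h1
    show qQ (bb ((g : G ⧸ H) * (g' : G ⧸ H)) y) = qQ (bb (g' : G ⧸ H) (g⁻¹ • y)) + qQ (bb (g : G ⧸ H) y)
    rw [← QuotientGroup.mk_mul, ← sub_eq_zero]
    rw [show qQ (bb ((g*g' : G) : G ⧸ H) y)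
        - (qQ (bb (g' : G ⧸ H) (g⁻¹ • y)) + qQ (bb (g : G ⧸ H) y))
        = -(qQ (bb (g' : G ⧸ H) (g⁻¹ • y)) - qQ (bb ((g*g' : G) : G ⧸ H) y)
            + qQ (bb (g : G ⧸ H) y)) from by abel, ← h1, neg_zero]
  -- Step D : the point-stabilizer vanishing, using the hypothesis on cyclic subgroups
  have hupt : ∀ (g : G) (y : Ys G H l), g • y = y → u (g : G ⧸ H) y = 0 := by
    intro g y hgy
    set G' := Subgroup.zpowers g with hG'd
    have hcyc : IsCyclic ↥G' := by
      refine ⟨⟨⟨g, Subgroup.mem_zpowers g⟩, fun x => ?_⟩⟩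
      obtain ⟨k, hk⟩ := Subgroup.mem_zpowers_iff.mp x.2
      refine Subgroup.mem_zpowers_iff.mpr ⟨k, ?_⟩
      apply Subtype.ext
      rw [SubgroupClass.coe_zpow]
      exact hk
    obtain ⟨aa, haa⟩ := hres G' hcyc
    haveI : Fintype (↥G' ⧸ (G' ⊓ H).subgroupOf G') := Fintype.ofFinite _
    obtain ⟨Abar, hAbar⟩ : ∃ Abar : (↥G' ⧸ (G' ⊓ H).subgroupOf G') → Dp G H l,
        ∀ x, (QuotientAddGroup.mk (Abar x) : Tp G H l) = (aa x : Tp G H l) := by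
      choose Ab hAb using fun x : ↥G' ⧸ (G' ⊓ H).subgroupOf G' =>
        QuotientAddGroup.mk_surjective ((aa x : Tp G H l))
      exact ⟨Ab, hAb⟩
    have hmemGH : ∀ κ : ↥G', (κ : G) ∈ H → ∀ x, ((κ : G)) • Abar x = Abar x := by
      intro κ hκ x
      refine lift_fixed G H l hκ _ ?_
      rw [← Tp_smul_mk, hAbar]
      have hmem : κ ∈ (G' ⊓ H).subgroupOf G' := Subgroup.mem_subgroupOf.mpr (Subgroup.mem_inf.mpr ⟨κ.2, hκ⟩)
      have h2 := (aa x).2 κ hmem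
      rw [Subgroup.smul_def] at h2
      exact h2
    have hjG : ∀ κ : ↥G', quotMap H G' (QuotientGroup.mk κ) = ((κ : G) : G ⧸ H) := by
      intro κ
      simp only [quotMap, QuotientGroup.map_mk]
      rfl
    have haaG : ∀ κ lam : ↥G',
        (f ((κ : G) : G ⧸ H) ((lam : G) : G ⧸ H) : Tp G H l)
          = (κ : G) • (aa (QuotientGroup.mk lam) : Tp G H l)
            - (aa (QuotientGroup.mk κ * QuotientGroup.mk lam) : Tp G H l)
            + (aa (QuotientGroup.mk κ) : Tp G H l) := by
      intro κ lam
      have h := haa (QuotientGroup.mk κ) (QuotientGroup.mk lam)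
      have h2 := congrArg (fun x : fixedBy ((G' ⊓ H).subgroupOf G') (Tp G H l) => (x : Tp G H l)) h
      simp only [AddSubgroup.coe_add, AddSubgroup.coe_sub, fixedBy_mk_smul,
        Subgroup.smul_def, fixedInc_coe, hjG] at h2
      exact h2
    set XB : ↥G' → ↥G' → Dp G H l := fun κ lam =>
      (κ : G) • Abar (QuotientGroup.mk lam)
        - Abar (QuotientGroup.mk κ * QuotientGroup.mk lam)
        + Abar (QuotientGroup.mk κ) with hXBd
    have hXBmk : ∀ κ lam : ↥G', (QuotientAddGroup.mk (XB κ lam) : Tp G H l)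
        = (f ((κ : G) : G ⧸ H) ((lam : G) : G ⧸ H) : Tp G H l) := by
      intro κ lam
      show (QuotientAddGroup.mk ((κ : G) • Abar (QuotientGroup.mk lam)
        - Abar (QuotientGroup.mk κ * QuotientGroup.mk lam)
        + Abar (QuotientGroup.mk κ)) : Tp G H l) = _
      simp only [QuotientAddGroup.mk_sub, QuotientAddGroup.mk_add, ← Tp_smul_mk, hAbar]
      exact (haaG κ lam).symm
    have hVmem : ∀ κ lam : ↥G',
        FD ((κ : G) : G ⧸ H) ((lam : G) : G ⧸ H) - XB κ lam ∈ (fp G H l).range := by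
      intro κ lam
      rw [← QuotientAddGroup.eq_zero_iff, QuotientAddGroup.mk_sub, hFDmk, hXBmk, sub_self]
    choose Vv hVv using fun κ lam => AddMonoidHom.mem_range.mp (hVmem κ lam)
    have hcosetH : ∀ κ κ' : ↥G', (QuotientGroup.mk κ : ↥G' ⧸ (G' ⊓ H).subgroupOf G') = QuotientGroup.mk κ' →
        ((κ : G) : G ⧸ H) = ((κ' : G) : G ⧸ H) := by
      intro κ κ' hκ
      have h1 : κ⁻¹ * κ' ∈ (G' ⊓ H).subgroupOf G' := QuotientGroup.eq.mp hκ
      exact QuotientGroup.eq.mpr (Subgroup.mem_inf.mp (Subgroup.mem_subgroupOf.mp h1)).2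
    have hXcongr : ∀ κ κ' lam lam' : ↥G',
        (QuotientGroup.mk κ : ↥G' ⧸ (G' ⊓ H).subgroupOf G') = QuotientGroup.mk κ' →
        (QuotientGroup.mk lam : ↥G' ⧸ (G' ⊓ H).subgroupOf G') = QuotientGroup.mk lam' →
        FD ((κ : G) : G ⧸ H) ((lam : G) : G ⧸ H) - XB κ lam
          = FD ((κ' : G) : G ⧸ H) ((lam' : G) : G ⧸ H) - XB κ' lam' := by
      intro κ κ' lam lam' hκ hlam
      have hκH := hcosetH κ κ' hκ
      have hlamH := hcosetH lam lam' hlam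
      have h1 : κ⁻¹ * κ' ∈ (G' ⊓ H).subgroupOf G' := QuotientGroup.eq.mp hκ
      have h2 : ((κ⁻¹ * κ' : ↥G') : G) ∈ H :=
        (Subgroup.mem_inf.mp (Subgroup.mem_subgroupOf.mp h1)).2
      have hsmul' : (κ : G) • Abar (QuotientGroup.mk lam')
          = (κ' : G) • Abar (QuotientGroup.mk lam') := by
        have h3 : (κ' : G) = (κ : G) * ((κ⁻¹ * κ' : ↥G') : G) := by
          rw [Subgroup.coe_mul]
          simp
        rw [h3, mul_smul, hmemGH _ h2]
      show FD _ _ - ((κ : G) • Abar (QuotientGroup.mk lam)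
          - Abar (QuotientGroup.mk κ * QuotientGroup.mk lam) + Abar (QuotientGroup.mk κ))
        = FD _ _ - ((κ' : G) • Abar (QuotientGroup.mk lam')
          - Abar (QuotientGroup.mk κ' * QuotientGroup.mk lam') + Abar (QuotientGroup.mk κ'))
      rw [hκH, hlamH, hκ, hlam, hsmul']
    set VΓ : (↥G' ⧸ (G' ⊓ H).subgroupOf G') → (↥G' ⧸ (G' ⊓ H).subgroupOf G') → (G ⧸ H) → ℤ := fun x z => Vv x.out z.out with hVΓd
    have hVΓ : ∀ κ lam : ↥G',
        fp G H l (VΓ (QuotientGroup.mk κ) (QuotientGroup.mk lam))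
          = FD ((κ : G) : G ⧸ H) ((lam : G) : G ⧸ H) - XB κ lam := by
      intro κ lam
      show fp G H l (Vv (QuotientGroup.mk κ : ↥G' ⧸ (G' ⊓ H).subgroupOf G').out
        (QuotientGroup.mk lam : ↥G' ⧸ (G' ⊓ H).subgroupOf G').out) = _
      rw [hVv]
      exact hXcongr _ _ _ _ (QuotientGroup.out_eq' _) (QuotientGroup.out_eq' _)
    have hVco : ∀ (x1 x2 x3 : ↥G' ⧸ (G' ⊓ H).subgroupOf G') (t : G ⧸ H),
        VΓ x2 x3 ((quotMap H G' x1)⁻¹ * t) - VΓ (x1*x2) x3 t + VΓ x1 (x2*x3) t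
          - VΓ x1 x2 t = 0 := by
      intro x1 x2 x3
      obtain ⟨κ, rfl⟩ : ∃ κ : ↥G', QuotientGroup.mk κ = x1 := ⟨x1.out, QuotientGroup.out_eq' x1⟩
      obtain ⟨lam, rfl⟩ : ∃ lam : ↥G', QuotientGroup.mk lam = x2 :=
        ⟨x2.out, QuotientGroup.out_eq' x2⟩
      obtain ⟨nu, rfl⟩ : ∃ nu : ↥G', QuotientGroup.mk nu = x3 :=
        ⟨x3.out, QuotientGroup.out_eq' x3⟩
      have hfn : (fun t => VΓ (QuotientGroup.mk lam) (QuotientGroup.mk nu)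
            ((((κ : G)) : G ⧸ H)⁻¹ * t))
          - VΓ (QuotientGroup.mk (κ*lam)) (QuotientGroup.mk nu)
          + VΓ (QuotientGroup.mk κ) (QuotientGroup.mk (lam*nu))
          - VΓ (QuotientGroup.mk κ) (QuotientGroup.mk lam) = 0 := by
        apply fp_injective G H l
        rw [map_zero]
        simp only [map_sub, map_add]
        rw [fp_shift G H l (κ : G) _, hVΓ, hVΓ, hVΓ, hVΓ]
        have h5 := hFDco (κ : G) (lam : G) (nu : G)
        have h6 : (κ : G) • XB lam nu - XB (κ*lam) nu + XB κ (lam*nu) - XB κ lam = 0 := by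
          simp only [hXBd, QuotientGroup.mk_mul, Subgroup.coe_mul, mul_smul, smul_sub,
            smul_add, mul_assoc]
          abel
        rw [smul_sub]
        exact four_term_regroup _ _ _ _ _ _ _ _ h5 h6
      intro t
      have h2 := congrFun hfn t
      have h3 := hjG κ
      simp only [← QuotientGroup.mk_mul, h3] at h2 ⊢
      simpa using h2
    have hjinj : Function.Injective (quotMap H G') := by
      intro x z hxz
      obtain ⟨κ, rfl⟩ : ∃ κ : ↥G', QuotientGroup.mk κ = x := ⟨x.out, QuotientGroup.out_eq' x⟩
      obtain ⟨lam, rfl⟩ : ∃ lam : ↥G', QuotientGroup.mk lam = z :=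
        ⟨z.out, QuotientGroup.out_eq' z⟩
      rw [hjG, hjG] at hxz
      have h1 : (κ : G)⁻¹ * (lam : G) ∈ H := QuotientGroup.eq.mp hxz
      refine QuotientGroup.eq.mpr (Subgroup.mem_subgroupOf.mpr (Subgroup.mem_inf.mpr
        ⟨(κ⁻¹ * lam).2, ?_⟩))
      exact h1
    obtain ⟨ξ, hξ⟩ := homotopy_deg2 (quotMap H G') hjinj VΓ hVco
    set Bbar : (↥G' ⧸ (G' ⊓ H).subgroupOf G') → Dp G H l := fun x => Abar x + fp G H l (ξ x) with hBbard
    have hclaim2 : ∀ κ lam : ↥G',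
        FD ((κ : G) : G ⧸ H) ((lam : G) : G ⧸ H)
          = (κ : G) • Bbar (QuotientGroup.mk lam)
            - Bbar (QuotientGroup.mk κ * QuotientGroup.mk lam)
            + Bbar (QuotientGroup.mk κ) := by
      intro κ lam
      have h1 := hVΓ κ lam
      have h2 : VΓ (QuotientGroup.mk κ) (QuotientGroup.mk lam)
          = fun t => ξ (QuotientGroup.mk lam) ((((κ : G)) : G ⧸ H)⁻¹ * t)
            - ξ (QuotientGroup.mk κ * QuotientGroup.mk lam) t
            + ξ (QuotientGroup.mk κ) t := by
        funext t
        have h3 := hξ (QuotientGroup.mk κ) (QuotientGroup.mk lam) t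
        rwa [hjG] at h3
      rw [h2] at h1
      have h3 : fp G H l (fun t => ξ (QuotientGroup.mk lam) ((((κ : G)) : G ⧸ H)⁻¹ * t)
            - ξ (QuotientGroup.mk κ * QuotientGroup.mk lam) t
            + ξ (QuotientGroup.mk κ) t)
          = (κ : G) • fp G H l (ξ (QuotientGroup.mk lam))
            - fp G H l (ξ (QuotientGroup.mk κ * QuotientGroup.mk lam))
            + fp G H l (ξ (QuotientGroup.mk κ)) := by
        rw [← fp_shift, ← map_sub, ← map_add]
        rfl
      rw [h3] at h1
      have h4 : FD ((κ : G) : G ⧸ H) ((lam : G) : G ⧸ H)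
          = XB κ lam + ((κ : G) • fp G H l (ξ (QuotientGroup.mk lam))
            - fp G H l (ξ (QuotientGroup.mk κ * QuotientGroup.mk lam))
            + fp G H l (ξ (QuotientGroup.mk κ))) := by
        rw [h1]; abel
      rw [h4]
      show _ = (κ : G) • (Abar (QuotientGroup.mk lam) + fp G H l (ξ (QuotientGroup.mk lam)))
        - (Abar (QuotientGroup.mk κ * QuotientGroup.mk lam)
          + fp G H l (ξ (QuotientGroup.mk κ * QuotientGroup.mk lam)))
        + (Abar (QuotientGroup.mk κ) + fp G H l (ξ (QuotientGroup.mk κ)))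
      simp only [hXBd, smul_add]
      abel
    have hBbarfix : ∀ (x : ↥G' ⧸ (G' ⊓ H).subgroupOf G') (h : G), h ∈ G' → h ∈ H → h • Bbar x = Bbar x := by
      intro x h hG hH
      show h • (Abar x + fp G H l (ξ x)) = Abar x + fp G H l (ξ x)
      rw [smul_add, hmemGH ⟨h, hG⟩ hH x, fp_Hfix G H l hH]
    set QB : (↥G' ⧸ (G' ⊓ H).subgroupOf G') → Ys G H l → ℚ :=
      fun x yy => ((toY G H l (Bbar x) yy : ℤ) : ℚ) with hQBd
    set vv : (↥G' ⧸ (G' ⊓ H).subgroupOf G') → Ys G H l → ℚ :=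
      fun x yy => bb (quotMap H G' x) yy - QB x yy with hvvd
    set act' : (↥G' ⧸ (G' ⊓ H).subgroupOf G') → Ys G H l → Ys G H l :=
      fun x yy => ((x.out : ↥G') : G)⁻¹ • yy with hact'd
    have hvvfixK : ∀ (x : ↥G' ⧸ (G' ⊓ H).subgroupOf G') (h : G), h ∈ G' → h ∈ H → ∀ yy, vv x (h • yy) = vv x yy := by
      intro x h hG hH yy
      show bb (quotMap H G' x) (h • yy) - QB x (h • yy) = bb (quotMap H G' x) yy - QB x yy
      rw [hbbfix _ h hH]
      have h1 : toY G H l (Bbar x) (h • yy) = toY G H l (Bbar x) yy := by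
        have h2 : toY G H l (h⁻¹ • Bbar x) yy = toY G H l (Bbar x) (h • yy) := by
          rw [toY_smul, inv_inv]
        rw [← h2, hBbarfix x h⁻¹ (inv_mem hG) (inv_mem hH)]
      show bb _ yy - ((toY G H l (Bbar x) (h • yy) : ℤ) : ℚ) = _
      rw [h1]
    have hvvact : ∀ (b' : ↥G' ⧸ (G' ⊓ H).subgroupOf G') (κ' : ↥G') (x : ↥G' ⧸ (G' ⊓ H).subgroupOf G'),
        (QuotientGroup.mk κ' : ↥G' ⧸ (G' ⊓ H).subgroupOf G') = x → ∀ yy,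
        vv b' (act' x yy) = vv b' ((κ' : G)⁻¹ • yy) := by
      intro b' κ' x hx yy
      have h1 : (QuotientGroup.mk x.out : ↥G' ⧸ (G' ⊓ H).subgroupOf G') = QuotientGroup.mk κ' := by
        rw [QuotientGroup.out_eq', ← hx]
      have h2 : κ'⁻¹ * x.out ∈ (G' ⊓ H).subgroupOf G' := QuotientGroup.eq.mp h1.symm
      have h4 : ((κ'⁻¹ * x.out : ↥G') : G) ∈ H :=
        (Subgroup.mem_inf.mp (Subgroup.mem_subgroupOf.mp h2)).2
      have h3 : x.out = κ' * (κ'⁻¹ * x.out) := by group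
      show vv b' (((x.out : ↥G') : G)⁻¹ • yy) = _
      rw [h3, Subgroup.coe_mul, mul_inv_rev, mul_smul]
      exact hvvfixK b' _ (inv_mem (κ'⁻¹ * x.out).2) (inv_mem h4) _
    have hvvco : ∀ (x1 x2 : ↥G' ⧸ (G' ⊓ H).subgroupOf G') (yy : Ys G H l),
        vv (x1*x2) yy = vv x2 (act' x1 yy) + vv x1 yy := by
      intro x1 x2 yy
      obtain ⟨κ, rfl⟩ : ∃ κ : ↥G', QuotientGroup.mk κ = x1 := ⟨x1.out, QuotientGroup.out_eq' x1⟩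
      obtain ⟨lam, rfl⟩ : ∃ lam : ↥G', QuotientGroup.mk lam = x2 :=
        ⟨x2.out, QuotientGroup.out_eq' x2⟩
      have hα := hbbg (κ : G) (lam : G) yy
      have hβ := congrArg (fun d => ((toY G H l d yy : ℤ) : ℚ)) (hclaim2 κ lam)
      simp only [toY_sub, toY_add, toY_smul] at hβ
      push_cast at hβ
      rw [hvvact (QuotientGroup.mk lam) κ (QuotientGroup.mk κ) rfl yy]
      show bb (quotMap H G' (QuotientGroup.mk κ * QuotientGroup.mk lam)) yy
          - QB (QuotientGroup.mk κ * QuotientGroup.mk lam) yy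
        = (bb (quotMap H G' (QuotientGroup.mk lam)) ((κ : G)⁻¹ • yy)
            - QB (QuotientGroup.mk lam) ((κ : G)⁻¹ • yy))
          + (bb (quotMap H G' (QuotientGroup.mk κ)) yy - QB (QuotientGroup.mk κ) yy)
      rw [map_mul, hjG, hjG]
      simp only [hFFQd] at hα
      simp only [hQBd]
      push_cast at hα hβ ⊢
      rw [← QuotientGroup.mk_mul]
      linarith [hα, hβ]
    obtain ⟨p, hpE, hpT⟩ := average_one act' vv hvvco
    set κ0 : ↥G' := ⟨g, Subgroup.mem_zpowers g⟩ with hκ0d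
    have hj0 : quotMap H G' (QuotientGroup.mk κ0) = (g : G ⧸ H) := hjG κ0
    have hvv0 : vv (QuotientGroup.mk κ0) y = 0 := by
      rw [hpE]
      have h1 : (QuotientGroup.mk ((QuotientGroup.mk κ0 : ↥G' ⧸ (G' ⊓ H).subgroupOf G').out)
          : ↥G' ⧸ (G' ⊓ H).subgroupOf G') = QuotientGroup.mk κ0 := QuotientGroup.out_eq' _
      have h2 : κ0⁻¹ * (QuotientGroup.mk κ0 : ↥G' ⧸ (G' ⊓ H).subgroupOf G').out
          ∈ (G' ⊓ H).subgroupOf G' := QuotientGroup.eq.mp h1.symm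
      set δ : ↥G' := κ0⁻¹ * (QuotientGroup.mk κ0 : ↥G' ⧸ (G' ⊓ H).subgroupOf G').out with hδd
      have hδH : (δ : G) ∈ H := (Subgroup.mem_inf.mp (Subgroup.mem_subgroupOf.mp h2)).2
      have h3 : (QuotientGroup.mk κ0 : ↥G' ⧸ (G' ⊓ H).subgroupOf G').out = κ0 * δ := by
        rw [hδd]; group
      have h5 : (κ0 : G)⁻¹ • y = y := by
        show g⁻¹ • y = y
        rw [inv_smul_eq_iff]
        exact hgy.symm
      have h4 : act' (QuotientGroup.mk κ0) y = (δ : G)⁻¹ • y := by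
        show (((QuotientGroup.mk κ0 : ↥G' ⧸ (G' ⊓ H).subgroupOf G').out : ↥G') : G)⁻¹ • y = _
        rw [h3, Subgroup.coe_mul, mul_inv_rev, mul_smul, h5]
      rw [h4]
      have h6 : p ((δ : G)⁻¹ • y) = p y :=
        hpT (fun z => (δ : G)⁻¹ • z)
          (fun b z => hvvfixK b _ (inv_mem δ.2) (inv_mem hδH) z) y
      rw [h6, sub_self]
    show qQ (bb (g : G ⧸ H) y) = 0
    have h7 : bb ((g : G ⧸ H)) y
        = vv (QuotientGroup.mk κ0) y + QB (QuotientGroup.mk κ0) y := by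
      show bb _ y = (bb (quotMap H G' (QuotientGroup.mk κ0)) y
        - QB (QuotientGroup.mk κ0) y) + QB (QuotientGroup.mk κ0) y
      rw [hj0]
      abel
    rw [h7, hvv0, zero_add]
    exact qQ_int _
  -- Step E : u is a coboundary
  obtain ⟨mbar, hmbarfix, hmbar⟩ := key_detect H u hufix huco hupt
  -- Step F : descend to an integral coboundary and conclude
  set ρY : Ys G H l → Ys G H l :=
    fun yy => (Quotient.mk (MulAction.orbitRel ↥H (Ys G H l)) yy).out with hρd
  have hρ_orbit : ∀ yy, ∃ κ : ↥H, κ • yy = ρY yy := by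
    intro yy
    have h : ρY yy ∈ MulAction.orbit ↥H yy :=
      MulAction.orbitRel_apply.mp
        (Quotient.exact (Quotient.out_eq (Quotient.mk (MulAction.orbitRel ↥H (Ys G H l)) yy)))
    obtain ⟨κ, hκ⟩ := h
    exact ⟨κ, hκ⟩
  have hρ_eq : ∀ (h : G), h ∈ H → ∀ yy, ρY (h • yy) = ρY yy := by
    intro h hh yy
    show (Quotient.mk (MulAction.orbitRel ↥H (Ys G H l)) (h • yy)).out
      = (Quotient.mk (MulAction.orbitRel ↥H (Ys G H l)) yy).out
    congr 1
    exact Quotient.sound (MulAction.orbitRel_apply.mpr ⟨⟨h, hh⟩, rfl⟩)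
  set mQ : Ys G H l → ℚ := fun yy => Quotient.out (mbar (ρY yy)) with hmQd
  have hmQ : ∀ yy, qQ (mQ yy) = mbar yy := by
    intro yy
    show qQ (Quotient.out (mbar (ρY yy))) = mbar yy
    rw [qQ_out]
    obtain ⟨κ, hκ⟩ := hρ_orbit yy
    rw [← hκ]
    exact hmbarfix (κ : G) κ.2 yy
  have hmQfix : ∀ (h : G), h ∈ H → ∀ yy, mQ (h • yy) = mQ yy := by
    intro h hh yy
    show Quotient.out (mbar (ρY (h • yy))) = Quotient.out (mbar (ρY yy))
    rw [hρ_eq h hh]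
  have hmQact : ∀ (a : G) (z : Ys G H l), mQ (actG (a : G ⧸ H) z) = mQ (a⁻¹ • z) := by
    intro a z
    obtain ⟨h, hh, hout'⟩ := hout (a : G ⧸ H) a rfl
    show mQ (((a : G ⧸ H).out)⁻¹ • z) = _
    rw [hout', mul_inv_rev, mul_smul]
    exact hmQfix h⁻¹ (inv_mem hh) _
  set cc : (G ⧸ H) → Ys G H l → ℚ := fun γ yy => bb γ yy - mQ (actG γ yy) + mQ yy with hccd
  have hccq : ∀ (γ : G ⧸ H) (yy : Ys G H l), ∃ k : ℤ, (k : ℚ) = cc γ yy := by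
    intro γ yy
    refine qQ_eq_zero ?_
    obtain ⟨a, rfl⟩ : ∃ a : G, (a : G ⧸ H) = γ := ⟨γ.out, QuotientGroup.out_eq' γ⟩
    show qQ (bb (a : G ⧸ H) yy - mQ (actG (a : G ⧸ H) yy) + mQ yy) = 0
    rw [hmQact a yy, map_add, map_sub, hmQ, hmQ]
    have h1 : qQ (bb (a : G ⧸ H) yy) = mbar (a⁻¹ • yy) - mbar yy := hmbar a yy
    rw [h1]
    abel
  choose CZ hCZ using hccq
  set DD : (G ⧸ H) → Dp G H l := fun γ => fromY G H l (CZ γ) with hDDd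
  have hDDtoY : ∀ (γ : G ⧸ H) (yy : Ys G H l), toY G H l (DD γ) yy = CZ γ yy := by
    intro γ yy
    show toY G H l (fromY G H l (CZ γ)) yy = CZ γ yy
    rw [toY_fromY]
  have hccfix : ∀ (γ : G ⧸ H) (h : G), h ∈ H → ∀ yy, cc γ (h • yy) = cc γ yy := by
    intro γ h hh yy
    obtain ⟨a, rfl⟩ : ∃ a : G, (a : G ⧸ H) = γ := ⟨γ.out, QuotientGroup.out_eq' γ⟩
    show bb (a : G ⧸ H) (h • yy) - mQ (actG (a : G ⧸ H) (h • yy)) + mQ (h • yy)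
      = bb (a : G ⧸ H) yy - mQ (actG (a : G ⧸ H) yy) + mQ yy
    rw [hbbfix _ h hh, hmQfix h hh, hmQact a (h • yy), hmQact a yy]
    have h1 : a⁻¹ • (h • yy) = (a⁻¹ * h * a) • (a⁻¹ • yy) := by
      rw [← mul_smul, ← mul_smul]
      congr 1
      group
    have h2 : a⁻¹ * h * a ∈ H := by
      have h3 := ‹H.Normal›.conj_mem h hh a⁻¹
      simpa using h3
    rw [h1, hmQfix _ h2]
  have hDDfix : ∀ (γ : G ⧸ H) (h : G), h ∈ H → h • DD γ = DD γ := by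
    intro γ h hh
    apply toY_injective G H l
    funext yy
    rw [toY_smul, hDDtoY, hDDtoY]
    have h1 : ((CZ γ (h⁻¹ • yy) : ℤ) : ℚ) = ((CZ γ yy : ℤ) : ℚ) := by
      rw [hCZ, hCZ, hccfix γ h⁻¹ (inv_mem hh) yy]
    exact_mod_cast h1
  have hmain : ∀ a b : G,
      FD (a : G ⧸ H) (b : G ⧸ H)
        = a • DD (b : G ⧸ H) - DD ((a*b : G) : G ⧸ H) + DD (a : G ⧸ H) := by
    intro a b
    apply toY_injective G H l
    funext yy
    simp only [toY_add, toY_sub, toY_smul, hDDtoY]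
    have hQ : ((toY G H l (FD (a : G ⧸ H) (b : G ⧸ H)) yy : ℤ) : ℚ)
        = ((CZ (b : G ⧸ H) (a⁻¹ • yy) : ℤ) : ℚ) - ((CZ ((a*b : G) : G ⧸ H) yy : ℤ) : ℚ)
          + ((CZ (a : G ⧸ H) yy : ℤ) : ℚ) := by
      rw [hCZ, hCZ, hCZ]
      show ((toY G H l (FD (a : G ⧸ H) (b : G ⧸ H)) yy : ℤ) : ℚ)
        = (bb (b : G ⧸ H) (a⁻¹ • yy) - mQ (actG (b : G ⧸ H) (a⁻¹ • yy)) + mQ (a⁻¹ • yy))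
          - (bb ((a*b : G) : G ⧸ H) yy - mQ (actG ((a*b : G) : G ⧸ H) yy) + mQ yy)
          + (bb (a : G ⧸ H) yy - mQ (actG (a : G ⧸ H) yy) + mQ yy)
      rw [hmQact b (a⁻¹ • yy), hmQact (a*b) yy, hmQact a yy]
      have h2 : b⁻¹ • (a⁻¹ • yy) = (a*b)⁻¹ • yy := by
        rw [← mul_smul]
        congr 1
        group
      rw [h2]
      have h1 := hbbg a b yy
      simp only [hFFQd] at h1
      rw [h1]
      ring
    exact_mod_cast hQ
  refine ⟨fun γ => ⟨QuotientAddGroup.mk (DD γ), ?_⟩, ?_⟩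
  · intro h hh
    rw [Tp_smul_mk, hDDfix γ h hh]
  · intro γ δ
    obtain ⟨a, rfl⟩ : ∃ a : G, (a : G ⧸ H) = γ := ⟨γ.out, QuotientGroup.out_eq' γ⟩
    obtain ⟨b, rfl⟩ : ∃ b : G, (b : G ⧸ H) = δ := ⟨δ.out, QuotientGroup.out_eq' δ⟩
    apply Subtype.ext
    show (f (a : G ⧸ H) (b : G ⧸ H) : Tp G H l)
      = (((a : G ⧸ H) • (⟨QuotientAddGroup.mk (DD (b : G ⧸ H)), _⟩ : fixedBy H (Tp G H l))
          - ⟨QuotientAddGroup.mk (DD ((a : G ⧸ H) * (b : G ⧸ H))), _⟩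
          + ⟨QuotientAddGroup.mk (DD (a : G ⧸ H)), _⟩ : fixedBy H (Tp G H l)) : Tp G H l)
    rw [AddSubgroup.coe_add, AddSubgroup.coe_sub, fixedBy_mk_smul]
    show (f (a : G ⧸ H) (b : G ⧸ H) : Tp G H l)
      = a • QuotientAddGroup.mk (DD (b : G ⧸ H))
        - QuotientAddGroup.mk (DD ((a : G ⧸ H) * (b : G ⧸ H)))
        + QuotientAddGroup.mk (DD (a : G ⧸ H))
    rw [← hFDmk, ← QuotientGroup.mk_mul, hmain a b, QuotientAddGroup.mk_add,
      QuotientAddGroup.mk_sub, Tp_smul_mk]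

end Normic
end

section
/- The homomorphism H²(G, T) → H²(G, T') induced by the G-module map j : T → T' is injective. -/
set_option synthInstance.maxHeartbeats 1000000
set_option maxHeartbeats 1600000

namespace Normic

section NormOne

variable (G : Type*) [Group G]

/-- The norm element `N_G = Σ_{g∈G} g` of the regular module `ℤ[G] = (G → ℤ)`:
the constant function `1`. -/
def normElt : G → ℤ := fun _ => (1 : ℤ)

/-- The character lattice of the norm-one torus: `T = ℤ[G]/(ℤ·N_G)`, the quotient of the
regular module by the subgroup generated by the norm element. -/
abbrev TT := (G → ℤ) ⧸ AddSubgroup.zmultiples (normElt G)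

lemma smul_normElt (g : G) : g • normElt G = normElt G := rfl

instance : SMul G (TT G) :=
  ⟨fun g => QuotientAddGroup.map _ _ (DistribMulAction.toAddMonoidHom (G → ℤ) g) (by
    intro d hd
    obtain ⟨k, rfl⟩ := AddSubgroup.mem_zmultiples_iff.mp hd
    refine AddSubgroup.mem_comap.mpr (AddSubgroup.mem_zmultiples_iff.mpr ⟨k, ?_⟩)
    show k • normElt G = g • k • normElt G
    rfl)⟩

lemma TT_smul_mk (g : G) (d : G → ℤ) :
    g • (QuotientAddGroup.mk d : TT G) = QuotientAddGroup.mk (g • d) := rfl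

/-- The `G`-action on `T = ℤ[G]/(ℤ·N_G)`. -/
instance : DistribMulAction G (TT G) where
  one_smul x := by
    induction x using QuotientAddGroup.induction_on with
    | H d => rw [TT_smul_mk, one_smul]
  mul_smul g g' x := by
    induction x using QuotientAddGroup.induction_on with
    | H d => rw [TT_smul_mk, TT_smul_mk, TT_smul_mk, mul_smul]
  smul_zero g :=
    map_zero (QuotientAddGroup.map _ _ (DistribMulAction.toAddMonoidHom (G → ℤ) g) _)
  smul_add g x y :=
    map_add (QuotientAddGroup.map _ _ (DistribMulAction.toAddMonoidHom (G → ℤ) g) _) x y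

end NormOne

section Klein

/-- The cyclic group `C₂` of order 2. -/
abbrev C2 : Type := Multiplicative (ZMod 2)

/-- The Klein four-group `G = C₂ × C₂`. -/
abbrev KG : Type := C2 × C2

/-- The factor subgroup `J₁ = {1} × C₂` of `G = C₂ × C₂`. -/
def J1 : Subgroup KG := (MonoidHom.fst C2 C2).ker

/-- The factor subgroup `J₂ = C₂ × {1}` of `G = C₂ × C₂`. -/
def J2 : Subgroup KG := (MonoidHom.snd C2 C2).ker

/-- The `G`-lattice `D = ((ℤ[G/J₁] ⊕ ℤ[G/J₂]) ⊗ ℤ[G]) ⊕ ℤ`, realized concretely: the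
tensor summands are the permutation lattices on `(G/J_i) × G` with the diagonal action,
and the trivial `G`-module `ℤ` is realized as `Unit → ℤ`. -/
abbrev DK : Type := (((KG ⧸ J1) × KG) → ℤ) × ((((KG ⧸ J2) × KG) → ℤ) × (Unit → ℤ))

/-- The `G`-equivariant map `f : ℤ[G/J₁] ⊕ ℤ[G/J₂] → D` sending each coset `τ` to
`(τ ⊗ N_G, −1)`. -/
noncomputable def fK : (((KG ⧸ J1) → ℤ) × ((KG ⧸ J2) → ℤ)) →+ DK :=
  AddMonoidHom.mk' (fun x =>
    (fun p => x.1 p.1,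
     fun p => x.2 p.1,
     fun _ => -((∑ᶠ τ, x.1 τ) + ∑ᶠ τ, x.2 τ))) (by
    intro x y
    have h1 : ∑ᶠ τ, (x.1 τ + y.1 τ) = (∑ᶠ τ, x.1 τ) + ∑ᶠ τ, y.1 τ :=
      finsum_add_distrib (Set.toFinite _) (Set.toFinite _)
    have h2 : ∑ᶠ τ, (x.2 τ + y.2 τ) = (∑ᶠ τ, x.2 τ) + ∑ᶠ τ, y.2 τ :=
      finsum_add_distrib (Set.toFinite _) (Set.toFinite _)
    refine Prod.ext ?_ (Prod.ext ?_ ?_)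
    · funext p; simp
    · funext p; simp
    · funext u
      show -(∑ᶠ τ, (x.1 τ + y.1 τ) + ∑ᶠ τ, (x.2 τ + y.2 τ)) = _
      rw [h1, h2]
      show _ = -((∑ᶠ τ, x.1 τ) + ∑ᶠ τ, x.2 τ) + -((∑ᶠ τ, y.1 τ) + ∑ᶠ τ, y.2 τ)
      ring)

lemma fK_apply (x : ((KG ⧸ J1) → ℤ) × ((KG ⧸ J2) → ℤ)) :
    fK x = (fun p => x.1 p.1, fun p => x.2 p.1,
      fun _ => -((∑ᶠ τ, x.1 τ) + ∑ᶠ τ, x.2 τ)) := rfl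

lemma fK_equivariant (g : KG) (x : ((KG ⧸ J1) → ℤ) × ((KG ⧸ J2) → ℤ)) :
    fK (g • x) = g • fK x := by
  have hre1 : ∑ᶠ τ, x.1 (g⁻¹ • τ) = ∑ᶠ τ, x.1 τ :=
    finsum_eq_of_bijective (fun τ => g⁻¹ • τ) (MulAction.bijective g⁻¹) (fun τ => rfl)
  have hre2 : ∑ᶠ τ, x.2 (g⁻¹ • τ) = ∑ᶠ τ, x.2 τ :=
    finsum_eq_of_bijective (fun τ => g⁻¹ • τ) (MulAction.bijective g⁻¹) (fun τ => rfl)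
  refine Prod.ext ?_ (Prod.ext ?_ ?_)
  · funext p
    simp only [fK_apply, funAction_smul_apply, Prod.smul_fst, Prod.smul_snd]
  · funext p
    simp only [fK_apply, funAction_smul_apply, Prod.smul_fst, Prod.smul_snd]
  · funext u
    show -(∑ᶠ τ, (g • x).1 τ + ∑ᶠ τ, (g • x).2 τ) = _
    have e1 : ∀ τ, (g • x).1 τ = x.1 (g⁻¹ • τ) := fun τ => rfl
    have e2 : ∀ τ, (g • x).2 τ = x.2 (g⁻¹ • τ) := fun τ => rfl
    simp only [e1, e2, hre1, hre2]
    rfl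

/-- The `G`-lattice `T' = coker(f : ℤ[G/J₁] ⊕ ℤ[G/J₂] → D)`. -/
noncomputable abbrev TK : Type := DK ⧸ fK.range

noncomputable instance : SMul KG TK :=
  ⟨fun g => QuotientAddGroup.map _ _ (DistribMulAction.toAddMonoidHom DK g) (by
    rintro _ ⟨x, rfl⟩
    exact ⟨g • x, fK_equivariant g x⟩)⟩

lemma TK_smul_mk (g : KG) (d : DK) :
    g • (QuotientAddGroup.mk d : TK) = QuotientAddGroup.mk (g • d) := rfl

/-- The `G`-action on `T'`. -/
noncomputable instance : DistribMulAction KG TK where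
  one_smul x := by
    induction x using QuotientAddGroup.induction_on with
    | H d => rw [TK_smul_mk, one_smul]
  mul_smul g g' x := by
    induction x using QuotientAddGroup.induction_on with
    | H d => rw [TK_smul_mk, TK_smul_mk, TK_smul_mk, mul_smul]
  smul_zero g :=
    map_zero (QuotientAddGroup.map _ _ (DistribMulAction.toAddMonoidHom DK g) _)
  smul_add g x y :=
    map_add (QuotientAddGroup.map _ _ (DistribMulAction.toAddMonoidHom DK g) _) x y

/-- The lift `ℤ[G] → D` of the map `j`, sending `σ` to `(−(N₁ + N₂) ⊗ σ, 1)`. -/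
noncomputable def j0 : (KG → ℤ) →+ DK :=
  AddMonoidHom.mk' (fun z =>
    (fun p => -(z p.2), fun p => -(z p.2), fun _ => ∑ᶠ g, z g)) (by
    intro z w
    have h : ∑ᶠ g, (z g + w g) = (∑ᶠ g, z g) + ∑ᶠ g, w g :=
      finsum_add_distrib (Set.toFinite _) (Set.toFinite _)
    refine Prod.ext ?_ (Prod.ext ?_ ?_)
    · funext p; show -((z + w) p.2) = _; simp; ring
    · funext p; show -((z + w) p.2) = _; simp; ring
    · funext u
      show ∑ᶠ g, (z g + w g) = _
      rw [h]; rfl)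

lemma j0_normElt_mem : j0 (normElt KG) ∈ fK.range := by
  classical
  refine ⟨(fun _ => -1, fun _ => -1), ?_⟩
  haveI : Fintype (KG ⧸ J1) := Fintype.ofFinite _
  haveI : Fintype (KG ⧸ J2) := Fintype.ofFinite _
  have hJ1 : Nat.card (KG ⧸ J1) = 2 := by
    show J1.index = 2
    rw [J1, Subgroup.index_ker]
    rw [MonoidHom.range_eq_top_of_surjective _ Prod.fst_surjective]
    rw [Subgroup.card_top, Nat.card_eq_fintype_card]
    decide
  have hJ2 : Nat.card (KG ⧸ J2) = 2 := by
    show J2.index = 2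
    rw [J2, Subgroup.index_ker]
    rw [MonoidHom.range_eq_top_of_surjective _ Prod.snd_surjective]
    rw [Subgroup.card_top, Nat.card_eq_fintype_card]
    decide
  have hc1 : Fintype.card (KG ⧸ J1) = 2 := by rw [← Nat.card_eq_fintype_card, hJ1]
  have hc2 : Fintype.card (KG ⧸ J2) = 2 := by rw [← Nat.card_eq_fintype_card, hJ2]
  have hs1 : (∑ᶠ τ : KG ⧸ J1, (-1 : ℤ)) = -2 := by
    rw [finsum_eq_sum_of_fintype, Finset.sum_const, Finset.card_univ, hc1]
    norm_num
  have hs2 : (∑ᶠ τ : KG ⧸ J2, (-1 : ℤ)) = -2 := by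
    rw [finsum_eq_sum_of_fintype, Finset.sum_const, Finset.card_univ, hc2]
    norm_num
  have hsG : (∑ᶠ g : KG, (1 : ℤ)) = 4 := by
    rw [finsum_eq_sum_of_fintype, Finset.sum_const, Finset.card_univ]
    norm_num
  refine Prod.ext rfl (Prod.ext rfl ?_)
  funext u
  show -((∑ᶠ τ : KG ⧸ J1, (-1 : ℤ)) + ∑ᶠ τ : KG ⧸ J2, (-1 : ℤ)) = ∑ᶠ g : KG, (1 : ℤ)
  rw [hs1, hs2, hsG]; norm_num

/-- The `G`-module homomorphism `j : T → T'` induced by `ℤ[G] → D, σ ↦ (−(N₁+N₂) ⊗ σ, 1)`;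
it is well defined since the image of `N_G` lies in the image of `f`. -/
noncomputable def jmap : TT KG →+ TK :=
  QuotientAddGroup.map _ _ j0 (by
    intro d hd
    obtain ⟨k, rfl⟩ := AddSubgroup.mem_zmultiples_iff.mp hd
    refine AddSubgroup.mem_comap.mpr ?_
    show j0 (k • normElt KG) ∈ fK.range
    rw [j0.map_zsmul]
    exact AddSubgroup.zsmul_mem _ j0_normElt_mem k)

end Klein


section Infra

/-- the three nontrivial elements of the Klein group -/
abbrev gks : KG := (Multiplicative.ofAdd 1, 1)
abbrev gkt : KG := (1, Multiplicative.ofAdd 1)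
abbrev gku : KG := (Multiplicative.ofAdd 1, Multiplicative.ofAdd 1)

instance (priority := 2000) decEqQ1 : DecidableEq (KG ⧸ J1) := fun x y =>
  Quotient.recOnSubsingleton₂ x y fun a b =>
    @decidable_of_iff _ _ (QuotientGroup.eq (s := J1)).symm
      (inferInstanceAs (Decidable ((a⁻¹ * b).1 = 1)))
instance (priority := 2000) decEqQ2 : DecidableEq (KG ⧸ J2) := fun x y =>
  Quotient.recOnSubsingleton₂ x y fun a b =>
    @decidable_of_iff _ _ (QuotientGroup.eq (s := J2)).symm
      (inferInstanceAs (Decidable ((a⁻¹ * b).2 = 1)))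
instance (priority := 2000) finQ1 : Fintype (KG ⧸ J1) :=
  @Quotient.fintype KG _ (QuotientGroup.leftRel J1) fun a b =>
    @decidable_of_iff _ _ (QuotientGroup.leftRel_apply (s := J1)).symm
      (inferInstanceAs (Decidable ((a⁻¹ * b).1 = 1)))
instance (priority := 2000) finQ2 : Fintype (KG ⧸ J2) :=
  @Quotient.fintype KG _ (QuotientGroup.leftRel J2) fun a b =>
    @decidable_of_iff _ _ (QuotientGroup.leftRel_apply (s := J2)).symm
      (inferInstanceAs (Decidable ((a⁻¹ * b).2 = 1)))

noncomputable abbrev ct1 : KG ⧸ J1 := (1 : KG)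
noncomputable abbrev cts : KG ⧸ J1 := (gks : KG)
noncomputable abbrev cr1 : KG ⧸ J2 := (1 : KG)
noncomputable abbrev crt : KG ⧸ J2 := (gkt : KG)

lemma enumKG : ∀ g : KG, g = 1 ∨ g = gks ∨ g = gkt ∨ g = gku := by decide
lemma enumQ1 : ∀ τ : KG ⧸ J1, τ = ct1 ∨ τ = cts := by decide
lemma enumQ2 : ∀ τ : KG ⧸ J2, τ = cr1 ∨ τ = crt := by decide

lemma gks_inv : gks⁻¹ = gks := by decide
lemma gkt_inv : gkt⁻¹ = gkt := by decide
lemma mul_ss : gks * gks = 1 := by decide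
lemma mul_st : gks * gkt = gku := by decide
lemma mul_su : gks * gku = gkt := by decide
lemma mul_ts : gkt * gks = gku := by decide
lemma mul_tt : gkt * gkt = 1 := by decide
lemma mul_tu : gkt * gku = gks := by decide
lemma act_s_t1 : gks • ct1 = cts := by decide
lemma act_s_ts : gks • cts = ct1 := by decide
lemma act_t_t1 : gkt • ct1 = ct1 := by decide
lemma act_t_ts : gkt • cts = cts := by decide
lemma act_s_r1 : gks • cr1 = cr1 := by decide
lemma act_s_rt : gks • crt = crt := by decide
lemma act_t_r1 : gkt • cr1 = crt := by decide
lemma act_t_rt : gkt • crt = cr1 := by decide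
lemma smul_unit (g : KG) (u : Unit) : g • u = () := rfl

lemma sumKG (z : KG → ℤ) : ∑ᶠ g, z g = z 1 + z gks + z gkt + z gku := by
  rw [finsum_eq_sum_of_fintype]
  rw [show (Finset.univ : Finset KG) = {1, gks, gkt, gku} from by decide]
  rw [Finset.sum_insert (by decide), Finset.sum_insert (by decide),
      Finset.sum_insert (by decide), Finset.sum_singleton]
  ring
lemma sumQ1 (y : KG ⧸ J1 → ℤ) : ∑ᶠ τ, y τ = y ct1 + y cts := by
  rw [finsum_eq_sum_of_fintype]
  rw [show (Finset.univ : Finset (KG ⧸ J1)) = {ct1, cts} from by decide]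
  rw [Finset.sum_insert (by decide), Finset.sum_singleton]
lemma sumQ2 (y : KG ⧸ J2 → ℤ) : ∑ᶠ τ, y τ = y cr1 + y crt := by
  rw [finsum_eq_sum_of_fintype]
  rw [show (Finset.univ : Finset (KG ⧸ J2)) = {cr1, crt} from by decide]
  rw [Finset.sum_insert (by decide), Finset.sum_singleton]

lemma j0_fst (z : KG → ℤ) (τ : KG ⧸ J1) (σ : KG) : (j0 z).1 (τ, σ) = -(z σ) := rfl
lemma j0_snd (z : KG → ℤ) (τ : KG ⧸ J2) (σ : KG) : (j0 z).2.1 (τ, σ) = -(z σ) := rfl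
lemma j0_thd (z : KG → ℤ) (u : Unit) : (j0 z).2.2 u = ∑ᶠ g, z g := rfl
lemma fK_fst (w : (KG ⧸ J1 → ℤ) × (KG ⧸ J2 → ℤ)) (τ : KG ⧸ J1) (σ : KG) :
    (fK w).1 (τ, σ) = w.1 τ := rfl
lemma fK_snd (w : (KG ⧸ J1 → ℤ) × (KG ⧸ J2 → ℤ)) (τ : KG ⧸ J2) (σ : KG) :
    (fK w).2.1 (τ, σ) = w.2 τ := rfl
lemma fK_thd (w : (KG ⧸ J1 → ℤ) × (KG ⧸ J2 → ℤ)) (u : Unit) :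
    (fK w).2.2 u = -((∑ᶠ τ, w.1 τ) + ∑ᶠ τ, w.2 τ) := rfl

/-- function on `KG` with prescribed values -/
def mk4 (c0 c1 c2 c3 : ℤ) : KG → ℤ := fun g =>
  if g = 1 then c0 else if g = gks then c1 else if g = gkt then c2 else c3
lemma mk4_1 (c0 c1 c2 c3 : ℤ) : mk4 c0 c1 c2 c3 1 = c0 := rfl
lemma mk4_s (c0 c1 c2 c3 : ℤ) : mk4 c0 c1 c2 c3 gks = c1 := by
  unfold mk4; rw [if_neg (by decide), if_pos rfl]
lemma mk4_t (c0 c1 c2 c3 : ℤ) : mk4 c0 c1 c2 c3 gkt = c2 := by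
  unfold mk4; rw [if_neg (by decide), if_neg (by decide), if_pos rfl]
lemma mk4_u (c0 c1 c2 c3 : ℤ) : mk4 c0 c1 c2 c3 gku = c3 := by
  unfold mk4; rw [if_neg (by decide), if_neg (by decide), if_neg (by decide)]

noncomputable def mkB1 (r0 r1 : KG → ℤ) : (KG ⧸ J1) × KG → ℤ := fun p =>
  if p.1 = ct1 then r0 p.2 else r1 p.2
lemma mkB1_1 (r0 r1 : KG → ℤ) (σ : KG) : mkB1 r0 r1 (ct1, σ) = r0 σ := if_pos rfl
lemma mkB1_s (r0 r1 : KG → ℤ) (σ : KG) : mkB1 r0 r1 (cts, σ) = r1 σ := if_neg (show cts ≠ ct1 by decide)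
noncomputable def mkB2 (r0 r1 : KG → ℤ) : (KG ⧸ J2) × KG → ℤ := fun p =>
  if p.1 = cr1 then r0 p.2 else r1 p.2
lemma mkB2_1 (r0 r1 : KG → ℤ) (σ : KG) : mkB2 r0 r1 (cr1, σ) = r0 σ := if_pos rfl
lemma mkB2_t (r0 r1 : KG → ℤ) (σ : KG) : mkB2 r0 r1 (crt, σ) = r1 σ := if_neg (show crt ≠ cr1 by decide)
noncomputable def mkJ1 (c0 c1 : ℤ) : KG ⧸ J1 → ℤ := fun τ => if τ = ct1 then c0 else c1
lemma mkJ1_1 (c0 c1 : ℤ) : mkJ1 c0 c1 ct1 = c0 := if_pos rfl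
lemma mkJ1_s (c0 c1 : ℤ) : mkJ1 c0 c1 cts = c1 := if_neg (by decide)
noncomputable def mkJ2 (c0 c1 : ℤ) : KG ⧸ J2 → ℤ := fun τ => if τ = cr1 then c0 else c1
lemma mkJ2_1 (c0 c1 : ℤ) : mkJ2 c0 c1 cr1 = c0 := if_pos rfl
lemma mkJ2_t (c0 c1 : ℤ) : mkJ2 c0 c1 crt = c1 := if_neg (by decide)

lemma j0_equivariant (g : KG) (z : KG → ℤ) : j0 (g • z) = g • j0 z := by
  refine Prod.ext rfl (Prod.ext rfl ?_)
  funext u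
  show ∑ᶠ σ, z (g⁻¹ • σ) = ∑ᶠ σ, z σ
  exact finsum_eq_of_bijective (fun σ => g⁻¹ • σ) (MulAction.bijective g⁻¹) (fun σ => rfl)

lemma jmap_mk (z : KG → ℤ) :
    jmap (QuotientAddGroup.mk z) = QuotientAddGroup.mk (j0 z) := rfl

lemma jmap_smul (g : KG) (x : TT KG) : jmap (g • x) = g • jmap x := by
  induction x using QuotientAddGroup.induction_on with
  | H z => rw [TT_smul_mk, jmap_mk, jmap_mk, TK_smul_mk, j0_equivariant]

lemma jmap_injective : Function.Injective (jmap : TT KG → TK) := by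
  intro x y hxy
  have hz : jmap (x - y) = 0 := by rw [map_sub, hxy, sub_self]
  obtain ⟨F, hF⟩ := QuotientAddGroup.mk_surjective (x - y)
  rw [← hF, jmap_mk, QuotientAddGroup.eq_zero_iff] at hz
  obtain ⟨w, hw⟩ := hz
  have hFc : ∀ σ : KG, F σ = -(w.1 ct1) := by
    intro σ
    have e := congrFun (congrArg Prod.fst hw) (ct1, σ)
    rw [fK_fst, j0_fst] at e
    omega
  have : x - y = 0 := by
    rw [← hF, QuotientAddGroup.eq_zero_iff]
    refine AddSubgroup.mem_zmultiples_iff.mpr ⟨-(w.1 ct1), ?_⟩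
    funext σ
    show -(w.1 ct1) • (1 : ℤ) = F σ
    rw [hFc σ, smul_eq_mul, mul_one]
  rw [sub_eq_zero] at this; exact this

end Infra

section Certify

set_option maxHeartbeats 4000000 in
lemma certify (As At : DK) (P1 P2 P3 : KG → ℤ)
    (W1 W2 W3 : (KG ⧸ J1 → ℤ) × (KG ⧸ J2 → ℤ))
    (H1 : gks • As + As = j0 P1 + fK W1)
    (H2 : gkt • At + At = j0 P2 + fK W2)
    (H3 : gks • At + As = gkt • As + At + j0 P3 + fK W3) :
    ∃ (q : DK) (σs σt : KG → ℤ) (ωs ωt : (KG ⧸ J1 → ℤ) × (KG ⧸ J2 → ℤ)),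
      As = gks • q - q + j0 σs + fK ωs ∧ At = gkt • q - q + j0 σt + fK ωt := by
  have e0 := congrFun (congrArg (fun x : DK => x.1) H1) ((ct1, 1) : (KG ⧸ J1) × KG)
  have e1 := congrFun (congrArg (fun x : DK => x.1) H1) ((ct1, gks) : (KG ⧸ J1) × KG)
  have e2 := congrFun (congrArg (fun x : DK => x.1) H1) ((ct1, gkt) : (KG ⧸ J1) × KG)
  have e3 := congrFun (congrArg (fun x : DK => x.1) H1) ((ct1, gku) : (KG ⧸ J1) × KG)
  have e4 := congrFun (congrArg (fun x : DK => x.1) H1) ((cts, 1) : (KG ⧸ J1) × KG)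
  have e5 := congrFun (congrArg (fun x : DK => x.1) H1) ((cts, gks) : (KG ⧸ J1) × KG)
  have e6 := congrFun (congrArg (fun x : DK => x.1) H1) ((cts, gkt) : (KG ⧸ J1) × KG)
  have e7 := congrFun (congrArg (fun x : DK => x.1) H1) ((cts, gku) : (KG ⧸ J1) × KG)
  have e8 := congrFun (congrArg (fun x : DK => x.2.1) H1) ((cr1, 1) : (KG ⧸ J2) × KG)
  have e9 := congrFun (congrArg (fun x : DK => x.2.1) H1) ((cr1, gks) : (KG ⧸ J2) × KG)
  have e10 := congrFun (congrArg (fun x : DK => x.2.1) H1) ((cr1, gkt) : (KG ⧸ J2) × KG)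
  have e11 := congrFun (congrArg (fun x : DK => x.2.1) H1) ((cr1, gku) : (KG ⧸ J2) × KG)
  have e12 := congrFun (congrArg (fun x : DK => x.2.1) H1) ((crt, 1) : (KG ⧸ J2) × KG)
  have e13 := congrFun (congrArg (fun x : DK => x.2.1) H1) ((crt, gks) : (KG ⧸ J2) × KG)
  have e14 := congrFun (congrArg (fun x : DK => x.2.1) H1) ((crt, gkt) : (KG ⧸ J2) × KG)
  have e15 := congrFun (congrArg (fun x : DK => x.2.1) H1) ((crt, gku) : (KG ⧸ J2) × KG)
  have e16 := congrFun (congrArg (fun x : DK => x.2.2) H1) ()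
  have e17 := congrFun (congrArg (fun x : DK => x.1) H2) ((ct1, 1) : (KG ⧸ J1) × KG)
  have e18 := congrFun (congrArg (fun x : DK => x.1) H2) ((ct1, gks) : (KG ⧸ J1) × KG)
  have e19 := congrFun (congrArg (fun x : DK => x.1) H2) ((ct1, gkt) : (KG ⧸ J1) × KG)
  have e20 := congrFun (congrArg (fun x : DK => x.1) H2) ((ct1, gku) : (KG ⧸ J1) × KG)
  have e21 := congrFun (congrArg (fun x : DK => x.1) H2) ((cts, 1) : (KG ⧸ J1) × KG)
  have e22 := congrFun (congrArg (fun x : DK => x.1) H2) ((cts, gks) : (KG ⧸ J1) × KG)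
  have e23 := congrFun (congrArg (fun x : DK => x.1) H2) ((cts, gkt) : (KG ⧸ J1) × KG)
  have e24 := congrFun (congrArg (fun x : DK => x.1) H2) ((cts, gku) : (KG ⧸ J1) × KG)
  have e25 := congrFun (congrArg (fun x : DK => x.2.1) H2) ((cr1, 1) : (KG ⧸ J2) × KG)
  have e26 := congrFun (congrArg (fun x : DK => x.2.1) H2) ((cr1, gks) : (KG ⧸ J2) × KG)
  have e27 := congrFun (congrArg (fun x : DK => x.2.1) H2) ((cr1, gkt) : (KG ⧸ J2) × KG)
  have e28 := congrFun (congrArg (fun x : DK => x.2.1) H2) ((cr1, gku) : (KG ⧸ J2) × KG)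
  have e29 := congrFun (congrArg (fun x : DK => x.2.1) H2) ((crt, 1) : (KG ⧸ J2) × KG)
  have e30 := congrFun (congrArg (fun x : DK => x.2.1) H2) ((crt, gks) : (KG ⧸ J2) × KG)
  have e31 := congrFun (congrArg (fun x : DK => x.2.1) H2) ((crt, gkt) : (KG ⧸ J2) × KG)
  have e32 := congrFun (congrArg (fun x : DK => x.2.1) H2) ((crt, gku) : (KG ⧸ J2) × KG)
  have e33 := congrFun (congrArg (fun x : DK => x.2.2) H2) ()
  have e34 := congrFun (congrArg (fun x : DK => x.1) H3) ((ct1, 1) : (KG ⧸ J1) × KG)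
  have e35 := congrFun (congrArg (fun x : DK => x.1) H3) ((ct1, gks) : (KG ⧸ J1) × KG)
  have e36 := congrFun (congrArg (fun x : DK => x.1) H3) ((ct1, gkt) : (KG ⧸ J1) × KG)
  have e37 := congrFun (congrArg (fun x : DK => x.1) H3) ((ct1, gku) : (KG ⧸ J1) × KG)
  have e38 := congrFun (congrArg (fun x : DK => x.1) H3) ((cts, 1) : (KG ⧸ J1) × KG)
  have e39 := congrFun (congrArg (fun x : DK => x.1) H3) ((cts, gks) : (KG ⧸ J1) × KG)
  have e40 := congrFun (congrArg (fun x : DK => x.1) H3) ((cts, gkt) : (KG ⧸ J1) × KG)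
  have e41 := congrFun (congrArg (fun x : DK => x.1) H3) ((cts, gku) : (KG ⧸ J1) × KG)
  have e42 := congrFun (congrArg (fun x : DK => x.2.1) H3) ((cr1, 1) : (KG ⧸ J2) × KG)
  have e43 := congrFun (congrArg (fun x : DK => x.2.1) H3) ((cr1, gks) : (KG ⧸ J2) × KG)
  have e44 := congrFun (congrArg (fun x : DK => x.2.1) H3) ((cr1, gkt) : (KG ⧸ J2) × KG)
  have e45 := congrFun (congrArg (fun x : DK => x.2.1) H3) ((cr1, gku) : (KG ⧸ J2) × KG)
  have e46 := congrFun (congrArg (fun x : DK => x.2.1) H3) ((crt, 1) : (KG ⧸ J2) × KG)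
  have e47 := congrFun (congrArg (fun x : DK => x.2.1) H3) ((crt, gks) : (KG ⧸ J2) × KG)
  have e48 := congrFun (congrArg (fun x : DK => x.2.1) H3) ((crt, gkt) : (KG ⧸ J2) × KG)
  have e49 := congrFun (congrArg (fun x : DK => x.2.1) H3) ((crt, gku) : (KG ⧸ J2) × KG)
  have e50 := congrFun (congrArg (fun x : DK => x.2.2) H3) ()
  simp only [Prod.fst_add, Prod.snd_add, Prod.fst_sub, Prod.snd_sub, Prod.smul_fst, Prod.smul_snd, Pi.add_apply, Pi.sub_apply, Pi.neg_apply, funAction_smul_apply, Prod.smul_mk, smul_eq_mul, gks_inv, gkt_inv, mul_ss, mul_st, mul_su, mul_ts, mul_tt, mul_tu, mul_one, one_mul, act_s_t1, act_s_ts, act_t_t1, act_t_ts, act_s_r1, act_s_rt, act_t_r1, act_t_rt, smul_unit, j0_fst, j0_snd, j0_thd, fK_fst, fK_snd, fK_thd, sumKG, sumQ1, sumQ2, mk4_1, mk4_s, mk4_t, mk4_u, mkB1_1, mkB1_s, mkB2_1, mkB2_t, mkJ1_1, mkJ1_s, mkJ2_1, mkJ2_t] at e0 e1 e2 e3 e4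 e5 e6 e7 e8 e9 e10 e11 e12 e13 e14 e15 e16 e17 e18 e19 e20 e21 e22 e23 e24 e25 e26 e27 e28 e29 e30 e31 e32 e33 e34 e35 e36 e37 e38 e39 e40 e41 e42 e43 e44 e45 e46 e47 e48 e49 e50
  refine ⟨((mkB1 (mk4 (3 * As.1 (ct1, gks) - As.1 (ct1, gkt) - As.1 (ct1, gku) + 2 * As.1 (cts, 1) + As.2.1 (cr1, 1) - 2 * As.2.1 (crt, 1) - 2 * As.2.1 (crt, gks) + 2 * As.2.1 (crt, gkt) + 3 * As.2.1 (crt, gku) + As.2.2 () - At.1 (ct1, gks) + At.1 (ct1, gkt) + At.1 (cts, 1) - At.2.1 (cr1, 1) + At.2.1 (cr1, gks)) (-As.1 (ct1, gks) - As.2.1 (cr1, 1) - As.2.1 (crt, gkt) - 2 * As.2.1 (crt, gku) - As.2.2 () - At.1 (ct1, 1) + At.1 (ct1, gks) - At.1 (ct1, gkt) + At.1 (ct1, gku) + At.2.1 (cr1, 1) - At.2.1 (cr1, gks)) (As.1 (ct1, gks) - As.1 (ct1, gkt) + As.1 (cts, 1) - As.2.1 (crt, 1) - As.2.1 (crt,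 gks) + As.2.1 (crt, gkt) + As.2.1 (crt, gku)) (-3 * As.1 (ct1, gks) + As.1 (ct1, gku) - As.1 (cts, 1) - 2 * As.2.1 (cr1, 1) + As.2.1 (crt, 1) + As.2.1 (crt, gks) - 2 * As.2.1 (crt, gkt) - 4 * As.2.1 (crt, gku) - 2 * As.2.2 () - At.1 (ct1, 1) + 2 * At.1 (ct1, gks) - At.1 (ct1, gkt) - At.1 (cts, 1) + 2 * At.2.1 (cr1, 1) - 2 * At.2.1 (cr1, gks))) (mk4 (0) (2 * As.1 (ct1, gks) - As.1 (ct1, gkt) - As.1 (ct1, gku) + As.1 (cts, 1) - As.1 (cts, gks) - As.2.1 (crt, 1) - As.2.1 (crt, gks) + As.2.1 (crt, gkt) + As.2.1 (crt, gku) - At.1 (ct1, 1) + At.1 (ct1, gku) + At.1 (cts, 1)) (-4 * As.1 (ct1, gks) + 2 * As.1 (ct1, gku) - 2 * As.1 (cts, 1) - 2 * As.2.1 (cr1, 1) + 2 * As.2.1 (crt, 1) + 2 * As.2.1 (crt, gks) - 2 * As.2.1 (crt, gkt) - 4 * As.2.1 (crt, gku) - 2 * As.2.2 () - At.1 (ct1,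 1) + 2 * At.1 (ct1, gks) - At.1 (ct1, gkt) - At.1 (cts, 1) + 2 * At.2.1 (cr1, 1) - 2 * At.2.1 (cr1, gks)) (0))), ((mkB2 (mk4 (As.2.1 (crt, gku) - At.2.1 (cr1, 1) + At.2.1 (cr1, gkt) + At.2.1 (crt, 1)) (-At.1 (ct1, 1) + At.1 (ct1, gks) - At.1 (ct1, gkt) + At.1 (ct1, gku) - At.2.1 (cr1, gks) + At.2.1 (cr1, gkt) + At.2.1 (crt, 1)) (-As.1 (ct1, gks) - As.1 (cts, 1) - As.2.1 (cr1, gkt) - As.2.2 ()) (0)) (mk4 (3 * As.1 (ct1, gks) - 2 * As.1 (ct1, gku) + As.1 (cts, 1) + 2 * As.2.1 (cr1, 1) - As.2.1 (cr1, gkt) - 2 * As.2.1 (crt, 1) - 2 * As.2.1 (crt, gks) + 2 * As.2.1 (crt, gkt) + 4 * As.2.1 (crt, gku) + As.2.2 () + At.1 (ct1, 1) - 2 * At.1 (ct1, gks) + At.1 (ct1, gkt) + 2 * At.1 (cts, 1) - 2 * At.2.1 (cr1, 1) + 2 * At.2.1 (cr1, gks) - At.2.1 (crt, 1)) (2 *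 As.1 (ct1, gks) - 2 * As.1 (ct1, gku) + As.2.1 (cr1, 1) - As.2.1 (cr1, gkt) - As.2.1 (crt, 1) - 2 * As.2.1 (crt, gks) + As.2.1 (crt, gkt) + 2 * As.2.1 (crt, gku) - At.1 (ct1, gks) + At.1 (ct1, gku) + 2 * At.1 (cts, 1) - At.2.1 (cr1, 1) + At.2.1 (cr1, gks) - At.2.1 (crt, 1)) (As.2.1 (crt, gku)) (0))), (fun _ => (0)))), (mk4 (-As.1 (ct1, gks) - As.1 (cts, 1) - As.2.1 (cr1, 1) - As.2.1 (crt, gkt) - 2 * As.2.1 (crt, gku) - As.2.2 () - At.1 (ct1, 1) + At.1 (ct1, gks) - At.1 (ct1, gkt) + At.1 (ct1, gku) + At.2.1 (cr1, 1) - At.2.1 (cr1, gks)) (As.1 (ct1, gks) + As.1 (cts, 1) + As.2.1 (cr1, 1) - As.2.1 (crt, 1) - As.2.1 (crt, gks) + As.2.1 (crt, gkt) + 2 * As.2.1 (crt, gku) + As.2.2 () + At.1 (ct1, 1) - At.1 (ct1, gks) + At.1 (ct1, gkt) - At.1 (ct1, gku) - At.2.1 (cr1, 1) + At.2.1 (cr1,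 gks)) (-As.2.1 (crt, gkt) - As.2.1 (crt, gku)) (0)), (mk4 (-4 * As.1 (ct1, gks) + 2 * As.1 (ct1, gku) - 2 * As.1 (cts, 1) - 2 * As.2.1 (cr1, 1) + 2 * As.2.1 (crt, 1) + 2 * As.2.1 (crt, gks) - 2 * As.2.1 (crt, gkt) - 4 * As.2.1 (crt, gku) - 2 * As.2.2 () - At.1 (ct1, 1) + 2 * At.1 (ct1, gks) - At.1 (ct1, gkt) - 2 * At.1 (cts, 1) + 2 * At.2.1 (cr1, 1) - 2 * At.2.1 (cr1, gks)) (-4 * As.1 (ct1, gks) + 2 * As.1 (ct1, gku) - 2 * As.1 (cts, 1) - 2 * As.2.1 (cr1, 1) + 2 * As.2.1 (crt, 1) + 2 * As.2.1 (crt, gks) - 2 * As.2.1 (crt, gkt) - 4 * As.2.1 (crt, gku) - 2 * As.2.2 () + At.1 (ct1, gks) - At.1 (ct1, gku) - 2 * At.1 (cts, 1) + 2 * At.2.1 (cr1, 1) - 2 * At.2.1 (cr1, gks)) (0) (0)), ((mkJ1 (As.1 (ct1, gks) + As.1 (cts, 1) - As.2.1 (crt, 1) - As.2.1 (crt, gks))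 (0)), (mkJ2 (-As.1 (ct1, gks) - As.1 (cts, 1) - As.2.1 (crt, gkt) - As.2.1 (crt, gku) - As.2.2 ()) (0))), ((mkJ1 (-2 * As.1 (ct1, gks) + As.1 (ct1, gku) - As.1 (cts, 1) - As.2.1 (cr1, 1) + As.2.1 (crt, 1) + As.2.1 (crt, gks) - As.2.1 (crt, gkt) - 2 * As.2.1 (crt, gku) - As.2.2 () + At.1 (ct1, gks) - At.1 (cts, 1) + At.2.1 (cr1, 1) - At.2.1 (cr1, gks)) (0)), (mkJ2 (-4 * As.1 (ct1, gks) + 2 * As.1 (ct1, gku) - 2 * As.1 (cts, 1) - 2 * As.2.1 (cr1, 1) + 2 * As.2.1 (crt, 1) + 2 * As.2.1 (crt, gks) - 2 * As.2.1 (crt, gkt) - 4 * As.2.1 (crt, gku) - 2 * As.2.2 () - At.1 (ct1, 1) + 2 * At.1 (ct1, gks) - At.1 (ct1, gkt) - 2 * At.1 (cts, 1) + 2 * At.2.1 (cr1, 1) - 2 * At.2.1 (cr1, gks) + At.2.1 (cr1, gkt) + At.2.1 (crt, 1)) (0))), ?_, ?_⟩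
  · refine Prod.ext ?_ (Prod.ext ?_ ?_)
    · funext p
      obtain ⟨τ, σ⟩ := p
      rcases enumQ1 τ with rfl | rfl
      · rcases enumKG σ with rfl | rfl | rfl | rfl
        · simp only [Prod.fst_add, Prod.snd_add, Prod.fst_sub, Prod.snd_sub, Prod.smul_fst, Prod.smul_snd, Pi.add_apply, Pi.sub_apply, Pi.neg_apply, funAction_smul_apply, Prod.smul_mk, smul_eq_mul, gks_inv, gkt_inv, mul_ss, mul_st, mul_su, mul_ts, mul_tt, mul_tu, mul_one, one_mul, act_s_t1, act_s_ts, act_t_t1, act_t_ts, act_s_r1, act_s_rt, act_t_r1, act_t_rt, smul_unit, j0_fst, j0_snd, j0_thd, fK_fst, fK_snd, fK_thd, sumKG, sumQ1, sumQ2, mk4_1, mk4_s, mk4_t, mk4_u, mkB1_1, mkB1_s, mkB2_1, mkB2_t, mkJ1_1, mkJ1_s, mkJ2_1, mkJ2_t]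
          linear_combination e0 - e1 - e12 + e13
        · simp only [Prod.fst_add, Prod.snd_add, Prod.fst_sub, Prod.snd_sub, Prod.smul_fst, Prod.smul_snd, Pi.add_apply, Pi.sub_apply, Pi.neg_apply, funAction_smul_apply, Prod.smul_mk, smul_eq_mul, gks_inv, gkt_inv, mul_ss, mul_st, mul_su, mul_ts, mul_tt, mul_tu, mul_one, one_mul, act_s_t1, act_s_ts, act_t_t1, act_t_ts, act_s_r1, act_s_rt, act_t_r1, act_t_rt, smul_unit, j0_fst, j0_snd, j0_thd, fK_fst, fK_snd, fK_thd, sumKG, sumQ1, sumQ2, mk4_1, mk4_s, mk4_t, mk4_u, mkB1_1, mkB1_s, mkB2_1, mkB2_t, mkJ1_1, mkJ1_s, mkJ2_1, mkJ2_t]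
          ring1
        · simp only [Prod.fst_add, Prod.snd_add, Prod.fst_sub, Prod.snd_sub, Prod.smul_fst, Prod.smul_snd, Pi.add_apply, Pi.sub_apply, Pi.neg_apply, funAction_smul_apply, Prod.smul_mk, smul_eq_mul, gks_inv, gkt_inv, mul_ss, mul_st, mul_su, mul_ts, mul_tt, mul_tu, mul_one, one_mul, act_s_t1, act_s_ts, act_t_t1, act_t_ts, act_s_r1, act_s_rt, act_t_r1, act_t_rt, smul_unit, j0_fst, j0_snd, j0_thd, fK_fst, fK_snd, fK_thd, sumKG, sumQ1, sumQ2, mk4_1, mk4_s, mk4_t, mk4_u, mkB1_1, mkB1_s, mkB2_1, mkB2_t, mkJ1_1, mkJ1_s, mkJ2_1, mkJ2_t]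
          ring1
        · simp only [Prod.fst_add, Prod.snd_add, Prod.fst_sub, Prod.snd_sub, Prod.smul_fst, Prod.smul_snd, Pi.add_apply, Pi.sub_apply, Pi.neg_apply, funAction_smul_apply, Prod.smul_mk, smul_eq_mul, gks_inv, gkt_inv, mul_ss, mul_st, mul_su, mul_ts, mul_tt, mul_tu, mul_one, one_mul, act_s_t1, act_s_ts, act_t_t1, act_t_ts, act_s_r1, act_s_rt, act_t_r1, act_t_rt, smul_unit, j0_fst, j0_snd, j0_thd, fK_fst, fK_snd, fK_thd, sumKG, sumQ1, sumQ2, mk4_1, mk4_s, mk4_t, mk4_u, mkB1_1, mkB1_s, mkB2_1, mkB2_t, mkJ1_1, mkJ1_s, mkJ2_1, mkJ2_t]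
          ring1
      · rcases enumKG σ with rfl | rfl | rfl | rfl
        · simp only [Prod.fst_add, Prod.snd_add, Prod.fst_sub, Prod.snd_sub, Prod.smul_fst, Prod.smul_snd, Pi.add_apply, Pi.sub_apply, Pi.neg_apply, funAction_smul_apply, Prod.smul_mk, smul_eq_mul, gks_inv, gkt_inv, mul_ss, mul_st, mul_su, mul_ts, mul_tt, mul_tu, mul_one, one_mul, act_s_t1, act_s_ts, act_t_t1, act_t_ts, act_s_r1, act_s_rt, act_t_r1, act_t_rt, smul_unit, j0_fst, j0_snd, j0_thd, fK_fst, fK_snd, fK_thd, sumKG, sumQ1, sumQ2, mk4_1, mk4_s, mk4_t, mk4_u, mkB1_1, mkB1_s, mkB2_1, mkB2_t, mkJ1_1, mkJ1_s, mkJ2_1, mkJ2_t]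
          ring1
        · simp only [Prod.fst_add, Prod.snd_add, Prod.fst_sub, Prod.snd_sub, Prod.smul_fst, Prod.smul_snd, Pi.add_apply, Pi.sub_apply, Pi.neg_apply, funAction_smul_apply, Prod.smul_mk, smul_eq_mul, gks_inv, gkt_inv, mul_ss, mul_st, mul_su, mul_ts, mul_tt, mul_tu, mul_one, one_mul, act_s_t1, act_s_ts, act_t_t1, act_t_ts, act_s_r1, act_s_rt, act_t_r1, act_t_rt, smul_unit, j0_fst, j0_snd, j0_thd, fK_fst, fK_snd, fK_thd, sumKG, sumQ1, sumQ2, mk4_1, mk4_s, mk4_t, mk4_u, mkB1_1, mkB1_s, mkB2_1, mkB2_t, mkJ1_1, mkJ1_s, mkJ2_1, mkJ2_t]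
          ring1
        · simp only [Prod.fst_add, Prod.snd_add, Prod.fst_sub, Prod.snd_sub, Prod.smul_fst, Prod.smul_snd, Pi.add_apply, Pi.sub_apply, Pi.neg_apply, funAction_smul_apply, Prod.smul_mk, smul_eq_mul, gks_inv, gkt_inv, mul_ss, mul_st, mul_su, mul_ts, mul_tt, mul_tu, mul_one, one_mul, act_s_t1, act_s_ts, act_t_t1, act_t_ts, act_s_r1, act_s_rt, act_t_r1, act_t_rt, smul_unit, j0_fst, j0_snd, j0_thd, fK_fst, fK_snd, fK_thd, sumKG, sumQ1, sumQ2, mk4_1, mk4_s, mk4_t, mk4_u, mkB1_1, mkB1_s, mkB2_1, mkB2_t, mkJ1_1, mkJ1_s, mkJ2_1, mkJ2_t]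
          linear_combination -e1 + e3 + e13 - e15
        · simp only [Prod.fst_add, Prod.snd_add, Prod.fst_sub, Prod.snd_sub, Prod.smul_fst, Prod.smul_snd, Pi.add_apply, Pi.sub_apply, Pi.neg_apply, funAction_smul_apply, Prod.smul_mk, smul_eq_mul, gks_inv, gkt_inv, mul_ss, mul_st, mul_su, mul_ts, mul_tt, mul_tu, mul_one, one_mul, act_s_t1, act_s_ts, act_t_t1, act_t_ts, act_s_r1, act_s_rt, act_t_r1, act_t_rt, smul_unit, j0_fst, j0_snd, j0_thd, fK_fst, fK_snd, fK_thd, sumKG, sumQ1, sumQ2, mk4_1, mk4_s, mk4_t, mk4_u, mkB1_1, mkB1_s, mkB2_1, mkB2_t, mkJ1_1, mkJ1_s, mkJ2_1, mkJ2_t]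
          linear_combination -e1 + e2 + e13 - e14
    · funext p
      obtain ⟨τ, σ⟩ := p
      rcases enumQ2 τ with rfl | rfl
      · rcases enumKG σ with rfl | rfl | rfl | rfl
        · simp only [Prod.fst_add, Prod.snd_add, Prod.fst_sub, Prod.snd_sub, Prod.smul_fst, Prod.smul_snd, Pi.add_apply, Pi.sub_apply, Pi.neg_apply, funAction_smul_apply, Prod.smul_mk, smul_eq_mul, gks_inv, gkt_inv, mul_ss, mul_st, mul_su, mul_ts, mul_tt, mul_tu, mul_one, one_mul, act_s_t1, act_s_ts, act_t_t1, act_t_ts, act_s_r1, act_s_rt, act_t_r1, act_t_rt, smul_unit, j0_fst, j0_snd, j0_thd, fK_fst, fK_snd, fK_thd, sumKG, sumQ1, sumQ2, mk4_1, mk4_s, mk4_t, mk4_u, mkB1_1, mkB1_s, mkB2_1, mkB2_t, mkJ1_1, mkJ1_s, mkJ2_1, mkJ2_t]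
          ring1
        · simp only [Prod.fst_add, Prod.snd_add, Prod.fst_sub, Prod.snd_sub, Prod.smul_fst, Prod.smul_snd, Pi.add_apply, Pi.sub_apply, Pi.neg_apply, funAction_smul_apply, Prod.smul_mk, smul_eq_mul, gks_inv, gkt_inv, mul_ss, mul_st, mul_su, mul_ts, mul_tt, mul_tu, mul_one, one_mul, act_s_t1, act_s_ts, act_t_t1, act_t_ts, act_s_r1, act_s_rt, act_t_r1, act_t_rt, smul_unit, j0_fst, j0_snd, j0_thd, fK_fst, fK_snd, fK_thd, sumKG, sumQ1, sumQ2, mk4_1, mk4_s, mk4_t, mk4_u, mkB1_1, mkB1_s, mkB2_1, mkB2_t, mkJ1_1, mkJ1_s, mkJ2_1, mkJ2_t]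
          linear_combination -e0 + 2 * e1 + e5 + e8 + e12 - 2 * e13 + e14 + e15 + e16
        · simp only [Prod.fst_add, Prod.snd_add, Prod.fst_sub, Prod.snd_sub, Prod.smul_fst, Prod.smul_snd, Pi.add_apply, Pi.sub_apply, Pi.neg_apply, funAction_smul_apply, Prod.smul_mk, smul_eq_mul, gks_inv, gkt_inv, mul_ss, mul_st, mul_su, mul_ts, mul_tt, mul_tu, mul_one, one_mul, act_s_t1, act_s_ts, act_t_t1, act_t_ts, act_s_r1, act_s_rt, act_t_r1, act_t_rt, smul_unit, j0_fst, j0_snd, j0_thd, fK_fst, fK_snd, fK_thd, sumKG, sumQ1, sumQ2, mk4_1, mk4_s, mk4_t, mk4_u, mkB1_1, mkB1_s, mkB2_1, mkB2_t, mkJ1_1, mkJ1_s, mkJ2_1, mkJ2_t]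
          ring1
        · simp only [Prod.fst_add, Prod.snd_add, Prod.fst_sub, Prod.snd_sub, Prod.smul_fst, Prod.smul_snd, Pi.add_apply, Pi.sub_apply, Pi.neg_apply, funAction_smul_apply, Prod.smul_mk, smul_eq_mul, gks_inv, gkt_inv, mul_ss, mul_st, mul_su, mul_ts, mul_tt, mul_tu, mul_one, one_mul, act_s_t1, act_s_ts, act_t_t1, act_t_ts, act_s_r1, act_s_rt, act_t_r1, act_t_rt, smul_unit, j0_fst, j0_snd, j0_thd, fK_fst, fK_snd, fK_thd, sumKG, sumQ1, sumQ2, mk4_1, mk4_s, mk4_t, mk4_u, mkB1_1, mkB1_s, mkB2_1, mkB2_t, mkJ1_1, mkJ1_s, mkJ2_1, mkJ2_t]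
          linear_combination -e0 + 2 * e1 + e5 + e10 + 2 * e12 - 2 * e13 + e15 + e16
      · rcases enumKG σ with rfl | rfl | rfl | rfl
        · simp only [Prod.fst_add, Prod.snd_add, Prod.fst_sub, Prod.snd_sub, Prod.smul_fst, Prod.smul_snd, Pi.add_apply, Pi.sub_apply, Pi.neg_apply, funAction_smul_apply, Prod.smul_mk, smul_eq_mul, gks_inv, gkt_inv, mul_ss, mul_st, mul_su, mul_ts, mul_tt, mul_tu, mul_one, one_mul, act_s_t1, act_s_ts, act_t_t1, act_t_ts, act_s_r1, act_s_rt, act_t_r1, act_t_rt, smul_unit, j0_fst, j0_snd, j0_thd, fK_fst, fK_snd, fK_thd, sumKG, sumQ1, sumQ2, mk4_1, mk4_s, mk4_t, mk4_u, mkB1_1, mkB1_s, mkB2_1, mkB2_t, mkJ1_1, mkJ1_s, mkJ2_1, mkJ2_t]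
          ring1
        · simp only [Prod.fst_add, Prod.snd_add, Prod.fst_sub, Prod.snd_sub, Prod.smul_fst, Prod.smul_snd, Pi.add_apply, Pi.sub_apply, Pi.neg_apply, funAction_smul_apply, Prod.smul_mk, smul_eq_mul, gks_inv, gkt_inv, mul_ss, mul_st, mul_su, mul_ts, mul_tt, mul_tu, mul_one, one_mul, act_s_t1, act_s_ts, act_t_t1, act_t_ts, act_s_r1, act_s_rt, act_t_r1, act_t_rt, smul_unit, j0_fst, j0_snd, j0_thd, fK_fst, fK_snd, fK_thd, sumKG, sumQ1, sumQ2, mk4_1, mk4_s, mk4_t, mk4_u, mkB1_1, mkB1_s, mkB2_1, mkB2_t, mkJ1_1, mkJ1_s, mkJ2_1, mkJ2_t]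
          ring1
        · simp only [Prod.fst_add, Prod.snd_add, Prod.fst_sub, Prod.snd_sub, Prod.smul_fst, Prod.smul_snd, Pi.add_apply, Pi.sub_apply, Pi.neg_apply, funAction_smul_apply, Prod.smul_mk, smul_eq_mul, gks_inv, gkt_inv, mul_ss, mul_st, mul_su, mul_ts, mul_tt, mul_tu, mul_one, one_mul, act_s_t1, act_s_ts, act_t_t1, act_t_ts, act_s_r1, act_s_rt, act_t_r1, act_t_rt, smul_unit, j0_fst, j0_snd, j0_thd, fK_fst, fK_snd, fK_thd, sumKG, sumQ1, sumQ2, mk4_1, mk4_s, mk4_t, mk4_u, mkB1_1, mkB1_s, mkB2_1, mkB2_t, mkJ1_1, mkJ1_s, mkJ2_1, mkJ2_t]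
          ring1
        · simp only [Prod.fst_add, Prod.snd_add, Prod.fst_sub, Prod.snd_sub, Prod.smul_fst, Prod.smul_snd, Pi.add_apply, Pi.sub_apply, Pi.neg_apply, funAction_smul_apply, Prod.smul_mk, smul_eq_mul, gks_inv, gkt_inv, mul_ss, mul_st, mul_su, mul_ts, mul_tt, mul_tu, mul_one, one_mul, act_s_t1, act_s_ts, act_t_t1, act_t_ts, act_s_r1, act_s_rt, act_t_r1, act_t_rt, smul_unit, j0_fst, j0_snd, j0_thd, fK_fst, fK_snd, fK_thd, sumKG, sumQ1, sumQ2, mk4_1, mk4_s, mk4_t, mk4_u, mkB1_1, mkB1_s, mkB2_1, mkB2_t, mkJ1_1, mkJ1_s, mkJ2_1, mkJ2_t]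
          ring1
    · funext u
      cases u
      simp only [Prod.fst_add, Prod.snd_add, Prod.fst_sub, Prod.snd_sub, Prod.smul_fst, Prod.smul_snd, Pi.add_apply, Pi.sub_apply, Pi.neg_apply, funAction_smul_apply, Prod.smul_mk, smul_eq_mul, gks_inv, gkt_inv, mul_ss, mul_st, mul_su, mul_ts, mul_tt, mul_tu, mul_one, one_mul, act_s_t1, act_s_ts, act_t_t1, act_t_ts, act_s_r1, act_s_rt, act_t_r1, act_t_rt, smul_unit, j0_fst, j0_snd, j0_thd, fK_fst, fK_snd, fK_thd, sumKG, sumQ1, sumQ2, mk4_1, mk4_s, mk4_t, mk4_u, mkB1_1, mkB1_s, mkB2_1, mkB2_t, mkJ1_1, mkJ1_s, mkJ2_1, mkJ2_t]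
      ring1
  · refine Prod.ext ?_ (Prod.ext ?_ ?_)
    · funext p
      obtain ⟨τ, σ⟩ := p
      rcases enumQ1 τ with rfl | rfl
      · rcases enumKG σ with rfl | rfl | rfl | rfl
        · simp only [Prod.fst_add, Prod.snd_add, Prod.fst_sub, Prod.snd_sub, Prod.smul_fst, Prod.smul_snd, Pi.add_apply, Pi.sub_apply, Pi.neg_apply, funAction_smul_apply, Prod.smul_mk, smul_eq_mul, gks_inv, gkt_inv, mul_ss, mul_st, mul_su, mul_ts, mul_tt, mul_tu, mul_one, one_mul, act_s_t1, act_s_ts, act_t_t1, act_t_ts, act_s_r1, act_s_rt, act_t_r1, act_t_rt, smul_unit, j0_fst, j0_snd, j0_thd, fK_fst, fK_snd, fK_thd, sumKG, sumQ1, sumQ2, mk4_1, mk4_s, mk4_t, mk4_u, mkB1_1, mkB1_s, mkB2_1, mkB2_t, mkJ1_1, mkJ1_s, mkJ2_1, mkJ2_t]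
          ring1
        · simp only [Prod.fst_add, Prod.snd_add, Prod.fst_sub, Prod.snd_sub, Prod.smul_fst, Prod.smul_snd, Pi.add_apply, Pi.sub_apply, Pi.neg_apply, funAction_smul_apply, Prod.smul_mk, smul_eq_mul, gks_inv, gkt_inv, mul_ss, mul_st, mul_su, mul_ts, mul_tt, mul_tu, mul_one, one_mul, act_s_t1, act_s_ts, act_t_t1, act_t_ts, act_s_r1, act_s_rt, act_t_r1, act_t_rt, smul_unit, j0_fst, j0_snd, j0_thd, fK_fst, fK_snd, fK_thd, sumKG, sumQ1, sumQ2, mk4_1, mk4_s, mk4_t, mk4_u, mkB1_1, mkB1_s, mkB2_1, mkB2_t, mkJ1_1, mkJ1_s, mkJ2_1, mkJ2_t]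
          ring1
        · simp only [Prod.fst_add, Prod.snd_add, Prod.fst_sub, Prod.snd_sub, Prod.smul_fst, Prod.smul_snd, Pi.add_apply, Pi.sub_apply, Pi.neg_apply, funAction_smul_apply, Prod.smul_mk, smul_eq_mul, gks_inv, gkt_inv, mul_ss, mul_st, mul_su, mul_ts, mul_tt, mul_tu, mul_one, one_mul, act_s_t1, act_s_ts, act_t_t1, act_t_ts, act_s_r1, act_s_rt, act_t_r1, act_t_rt, smul_unit, j0_fst, j0_snd, j0_thd, fK_fst, fK_snd, fK_thd, sumKG, sumQ1, sumQ2, mk4_1, mk4_s, mk4_t, mk4_u, mkB1_1, mkB1_s, mkB2_1, mkB2_t, mkJ1_1, mkJ1_s, mkJ2_1, mkJ2_t]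
          ring1
        · simp only [Prod.fst_add, Prod.snd_add, Prod.fst_sub, Prod.snd_sub, Prod.smul_fst, Prod.smul_snd, Pi.add_apply, Pi.sub_apply, Pi.neg_apply, funAction_smul_apply, Prod.smul_mk, smul_eq_mul, gks_inv, gkt_inv, mul_ss, mul_st, mul_su, mul_ts, mul_tt, mul_tu, mul_one, one_mul, act_s_t1, act_s_ts, act_t_t1, act_t_ts, act_s_r1, act_s_rt, act_t_r1, act_t_rt, smul_unit, j0_fst, j0_snd, j0_thd, fK_fst, fK_snd, fK_thd, sumKG, sumQ1, sumQ2, mk4_1, mk4_s, mk4_t, mk4_u, mkB1_1, mkB1_s, mkB2_1, mkB2_t, mkJ1_1, mkJ1_s, mkJ2_1, mkJ2_t]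
          ring1
      · rcases enumKG σ with rfl | rfl | rfl | rfl
        · simp only [Prod.fst_add, Prod.snd_add, Prod.fst_sub, Prod.snd_sub, Prod.smul_fst, Prod.smul_snd, Pi.add_apply, Pi.sub_apply, Pi.neg_apply, funAction_smul_apply, Prod.smul_mk, smul_eq_mul, gks_inv, gkt_inv, mul_ss, mul_st, mul_su, mul_ts, mul_tt, mul_tu, mul_one, one_mul, act_s_t1, act_s_ts, act_t_t1, act_t_ts, act_s_r1, act_s_rt, act_t_r1, act_t_rt, smul_unit, j0_fst, j0_snd, j0_thd, fK_fst, fK_snd, fK_thd, sumKG, sumQ1, sumQ2, mk4_1, mk4_s, mk4_t, mk4_u, mkB1_1, mkB1_s, mkB2_1, mkB2_t, mkJ1_1, mkJ1_s, mkJ2_1, mkJ2_t]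
          ring1
        · simp only [Prod.fst_add, Prod.snd_add, Prod.fst_sub, Prod.snd_sub, Prod.smul_fst, Prod.smul_snd, Pi.add_apply, Pi.sub_apply, Pi.neg_apply, funAction_smul_apply, Prod.smul_mk, smul_eq_mul, gks_inv, gkt_inv, mul_ss, mul_st, mul_su, mul_ts, mul_tt, mul_tu, mul_one, one_mul, act_s_t1, act_s_ts, act_t_t1, act_t_ts, act_s_r1, act_s_rt, act_t_r1, act_t_rt, smul_unit, j0_fst, j0_snd, j0_thd, fK_fst, fK_snd, fK_thd, sumKG, sumQ1, sumQ2, mk4_1, mk4_s, mk4_t, mk4_u, mkB1_1, mkB1_s, mkB2_1, mkB2_t, mkJ1_1, mkJ1_s, mkJ2_1, mkJ2_t]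
          linear_combination -e1 - e5 - e8 + e13 - e14 - e15 - e16 + e34 - e35 - e42 + e43
        · simp only [Prod.fst_add, Prod.snd_add, Prod.fst_sub, Prod.snd_sub, Prod.smul_fst, Prod.smul_snd, Pi.add_apply, Pi.sub_apply, Pi.neg_apply, funAction_smul_apply, Prod.smul_mk, smul_eq_mul, gks_inv, gkt_inv, mul_ss, mul_st, mul_su, mul_ts, mul_tt, mul_tu, mul_one, one_mul, act_s_t1, act_s_ts, act_t_t1, act_t_ts, act_s_r1, act_s_rt, act_t_r1, act_t_rt, smul_unit, j0_fst, j0_snd, j0_thd, fK_fst, fK_snd, fK_thd, sumKG, sumQ1, sumQ2, mk4_1, mk4_s, mk4_t, mk4_u, mkB1_1, mkB1_s, mkB2_1, mkB2_t, mkJ1_1, mkJ1_s, mkJ2_1, mkJ2_t]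
          linear_combination e0 - 3 * e1 + e3 - e5 - e8 - e12 + 3 * e13 - e14 - 2 * e15 - e16 - e17 + e18 + e21 - e22 - e23 + e24 + e27 - e28 + e37 + e38 - e42 + e43 + e44 + e46 + e50
        · simp only [Prod.fst_add, Prod.snd_add, Prod.fst_sub, Prod.snd_sub, Prod.smul_fst, Prod.smul_snd, Pi.add_apply, Pi.sub_apply, Pi.neg_apply, funAction_smul_apply, Prod.smul_mk, smul_eq_mul, gks_inv, gkt_inv, mul_ss, mul_st, mul_su, mul_ts, mul_tt, mul_tu, mul_one, one_mul, act_s_t1, act_s_ts, act_t_t1, act_t_ts, act_s_r1, act_s_rt, act_t_r1, act_t_rt, smul_unit, j0_fst, j0_snd, j0_thd, fK_fst, fK_snd, fK_thd, sumKG, sumQ1, sumQ2, mk4_1, mk4_s, mk4_t, mk4_u, mkB1_1, mkB1_s, mkB2_1, mkB2_t, mkJ1_1, mkJ1_s, mkJ2_1, mkJ2_t]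
          linear_combination e0 - 2 * e1 + e3 - e12 + 2 * e13 - e15 - e23 + e24 + e27 - e28 - e34 + e35 + e37 + e38 + e44 + e46 + e50
    · funext p
      obtain ⟨τ, σ⟩ := p
      rcases enumQ2 τ with rfl | rfl
      · rcases enumKG σ with rfl | rfl | rfl | rfl
        · simp only [Prod.fst_add, Prod.snd_add, Prod.fst_sub, Prod.snd_sub, Prod.smul_fst, Prod.smul_snd, Pi.add_apply, Pi.sub_apply, Pi.neg_apply, funAction_smul_apply, Prod.smul_mk, smul_eq_mul, gks_inv, gkt_inv, mul_ss, mul_st, mul_su, mul_ts, mul_tt, mul_tu, mul_one, one_mul, act_s_t1, act_s_ts, act_t_t1, act_t_ts, act_s_r1, act_s_rt, act_t_r1, act_t_rt, smul_unit, j0_fst, j0_snd, j0_thd, fK_fst, fK_snd, fK_thd, sumKG, sumQ1, sumQ2, mk4_1, mk4_s, mk4_t, mk4_u, mkB1_1, mkB1_s, mkB2_1, mkB2_t, mkJ1_1, mkJ1_s, mkJ2_1, mkJ2_t]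
          ring1
        · simp only [Prod.fst_add, Prod.snd_add, Prod.fst_sub, Prod.snd_sub, Prod.smul_fst, Prod.smul_snd, Pi.add_apply, Pi.sub_apply, Pi.neg_apply, funAction_smul_apply, Prod.smul_mk, smul_eq_mul, gks_inv, gkt_inv, mul_ss, mul_st, mul_su, mul_ts, mul_tt, mul_tu, mul_one, one_mul, act_s_t1, act_s_ts, act_t_t1, act_t_ts, act_s_r1, act_s_rt, act_t_r1, act_t_rt, smul_unit, j0_fst, j0_snd, j0_thd, fK_fst, fK_snd, fK_thd, sumKG, sumQ1, sumQ2, mk4_1, mk4_s, mk4_t, mk4_u, mkB1_1, mkB1_s, mkB2_1, mkB2_t, mkJ1_1, mkJ1_s, mkJ2_1, mkJ2_t]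
          ring1
        · simp only [Prod.fst_add, Prod.snd_add, Prod.fst_sub, Prod.snd_sub, Prod.smul_fst, Prod.smul_snd, Pi.add_apply, Pi.sub_apply, Pi.neg_apply, funAction_smul_apply, Prod.smul_mk, smul_eq_mul, gks_inv, gkt_inv, mul_ss, mul_st, mul_su, mul_ts, mul_tt, mul_tu, mul_one, one_mul, act_s_t1, act_s_ts, act_t_t1, act_t_ts, act_s_r1, act_s_rt, act_t_r1, act_t_rt, smul_unit, j0_fst, j0_snd, j0_thd, fK_fst, fK_snd, fK_thd, sumKG, sumQ1, sumQ2, mk4_1, mk4_s, mk4_t, mk4_u, mkB1_1, mkB1_s, mkB2_1, mkB2_t, mkJ1_1, mkJ1_s, mkJ2_1, mkJ2_t]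
          ring1
        · simp only [Prod.fst_add, Prod.snd_add, Prod.fst_sub, Prod.snd_sub, Prod.smul_fst, Prod.smul_snd, Pi.add_apply, Pi.sub_apply, Pi.neg_apply, funAction_smul_apply, Prod.smul_mk, smul_eq_mul, gks_inv, gkt_inv, mul_ss, mul_st, mul_su, mul_ts, mul_tt, mul_tu, mul_one, one_mul, act_s_t1, act_s_ts, act_t_t1, act_t_ts, act_s_r1, act_s_rt, act_t_r1, act_t_rt, smul_unit, j0_fst, j0_snd, j0_thd, fK_fst, fK_snd, fK_thd, sumKG, sumQ1, sumQ2, mk4_1, mk4_s, mk4_t, mk4_u, mkB1_1, mkB1_s, mkB2_1, mkB2_t, mkJ1_1, mkJ1_s, mkJ2_1, mkJ2_t]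
          linear_combination -e0 + e1 + e3 + e5 + e8 + e12 - e13 + e14 + e16 - e23 + e24 + e27 - e28 - e34 + 2 * e35 - e36 + e37 + e38 - e43 + 2 * e44 + e46 + e50
      · rcases enumKG σ with rfl | rfl | rfl | rfl
        · simp only [Prod.fst_add, Prod.snd_add, Prod.fst_sub, Prod.snd_sub, Prod.smul_fst, Prod.smul_snd, Pi.add_apply, Pi.sub_apply, Pi.neg_apply, funAction_smul_apply, Prod.smul_mk, smul_eq_mul, gks_inv, gkt_inv, mul_ss, mul_st, mul_su, mul_ts, mul_tt, mul_tu, mul_one, one_mul, act_s_t1, act_s_ts, act_t_t1, act_t_ts, act_s_r1, act_s_rt, act_t_r1, act_t_rt, smul_unit, j0_fst, j0_snd, j0_thd, fK_fst, fK_snd, fK_thd, sumKG, sumQ1, sumQ2, mk4_1, mk4_s, mk4_t, mk4_u, mkB1_1, mkB1_s, mkB2_1, mkB2_t, mkJ1_1, mkJ1_s, mkJ2_1, mkJ2_t]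
          ring1
        · simp only [Prod.fst_add, Prod.snd_add, Prod.fst_sub, Prod.snd_sub, Prod.smul_fst, Prod.smul_snd, Pi.add_apply, Pi.sub_apply, Pi.neg_apply, funAction_smul_apply, Prod.smul_mk, smul_eq_mul, gks_inv, gkt_inv, mul_ss, mul_st, mul_su, mul_ts, mul_tt, mul_tu, mul_one, one_mul, act_s_t1, act_s_ts, act_t_t1, act_t_ts, act_s_r1, act_s_rt, act_t_r1, act_t_rt, smul_unit, j0_fst, j0_snd, j0_thd, fK_fst, fK_snd, fK_thd, sumKG, sumQ1, sumQ2, mk4_1, mk4_s, mk4_t, mk4_u, mkB1_1, mkB1_s, mkB2_1, mkB2_t, mkJ1_1, mkJ1_s, mkJ2_1, mkJ2_t]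
          linear_combination e0 - e1 - e3 - e5 - e8 - e12 + e13 - e14 - e16 + e17 - e18 - e21 + e22 + 2 * e23 - 2 * e24 - 2 * e27 + 2 * e28 + e34 - 2 * e35 + e36 - e37 - e38 + e43 - 2 * e44 - e46 - e50
        · simp only [Prod.fst_add, Prod.snd_add, Prod.fst_sub, Prod.snd_sub, Prod.smul_fst, Prod.smul_snd, Pi.add_apply, Pi.sub_apply, Pi.neg_apply, funAction_smul_apply, Prod.smul_mk, smul_eq_mul, gks_inv, gkt_inv, mul_ss, mul_st, mul_su, mul_ts, mul_tt, mul_tu, mul_one, one_mul, act_s_t1, act_s_ts, act_t_t1, act_t_ts, act_s_r1, act_s_rt, act_t_r1, act_t_rt, smul_unit, j0_fst, j0_snd, j0_thd, fK_fst, fK_snd, fK_thd, sumKG, sumQ1, sumQ2, mk4_1, mk4_s, mk4_t, mk4_u, mkB1_1, mkB1_s, mkB2_1, mkB2_t, mkJ1_1, mkJ1_s, mkJ2_1, mkJ2_t]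
          linear_combination -e21 + e23 + e25 - e27
        · simp only [Prod.fst_add, Prod.snd_add, Prod.fst_sub, Prod.snd_sub, Prod.smul_fst, Prod.smul_snd, Pi.add_apply, Pi.sub_apply, Pi.neg_apply, funAction_smul_apply, Prod.smul_mk, smul_eq_mul, gks_inv, gkt_inv, mul_ss, mul_st, mul_su, mul_ts, mul_tt, mul_tu, mul_one, one_mul, act_s_t1, act_s_ts, act_t_t1, act_t_ts, act_s_r1, act_s_rt, act_t_r1, act_t_rt, smul_unit, j0_fst, j0_snd, j0_thd, fK_fst, fK_snd, fK_thd, sumKG, sumQ1, sumQ2, mk4_1, mk4_s, mk4_t, mk4_u, mkB1_1, mkB1_s, mkB2_1, mkB2_t, mkJ1_1, mkJ1_s, mkJ2_1, mkJ2_t]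
          linear_combination e17 - e18 - e21 + e23 + e26 - e27
    · funext u
      cases u
      simp only [Prod.fst_add, Prod.snd_add, Prod.fst_sub, Prod.snd_sub, Prod.smul_fst, Prod.smul_snd, Pi.add_apply, Pi.sub_apply, Pi.neg_apply, funAction_smul_apply, Prod.smul_mk, smul_eq_mul, gks_inv, gkt_inv, mul_ss, mul_st, mul_su, mul_ts, mul_tt, mul_tu, mul_one, one_mul, act_s_t1, act_s_ts, act_t_t1, act_t_ts, act_s_r1, act_s_rt, act_t_r1, act_t_rt, smul_unit, j0_fst, j0_snd, j0_thd, fK_fst, fK_snd, fK_thd, sumKG, sumQ1, sumQ2, mk4_1, mk4_s, mk4_t, mk4_u, mkB1_1, mkB1_s, mkB2_1, mkB2_t, mkJ1_1, mkJ1_s, mkJ2_1, mkJ2_t]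
      refine mul_left_cancel₀ (show (2:ℤ) ≠ 0 by norm_num) ?_
      linear_combination -e0 + 3 * e1 - e3 + e5 + e8 + e12 - 3 * e13 + e14 + 2 * e15 + e16 + e18 + e21 - e22 + e24 + e27 + e30 + e33 - e37 - e38 + e42 - e43 - e44 - e46 - e50

end Certify


/-- For the Klein four-group `G = C₂ × C₂`, the lattices
`T = ℤ[G]/(ℤ·N_G)` and `T' = coker(f : ℤ[G/J₁] ⊕ ℤ[G/J₂] → D)`, and the induced
`G`-module map `j : T → T'`, the homomorphism `H²(G, T) → H²(G, T')` induced by `j` is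
injective.  (Expressed at the level of cocycles: a 2-cocycle of `G` with values in `T`
whose image under `j` is a 2-coboundary is itself a 2-coboundary.) -/
theorem stmt5 (f2 : KG → KG → TT KG) (hf : IsTwoCocycle f2)
    (h : IsTwoCoboundary (fun a b => jmap (f2 a b))) :
    IsTwoCoboundary f2 := by
  classical
  obtain ⟨a, ha0⟩ := h
  have ha : ∀ g h' : KG, jmap (f2 g h') = g • a h' - a (g * h') + a g := ha0
  have hA1 : a 1 = jmap (f2 1 1) := by
    have e := ha 1 1
    rw [one_mul, one_smul] at e
    rw [e]; abel
  obtain ⟨As, hAs⟩ := QuotientAddGroup.mk_surjective (a gks)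
  obtain ⟨At, hAt⟩ := QuotientAddGroup.mk_surjective (a gkt)
  obtain ⟨P1, hP1⟩ := QuotientAddGroup.mk_surjective (f2 gks gks + f2 1 1)
  obtain ⟨P2, hP2⟩ := QuotientAddGroup.mk_surjective (f2 gkt gkt + f2 1 1)
  obtain ⟨P3, hP3⟩ := QuotientAddGroup.mk_surjective (f2 gks gkt - f2 gkt gks)
  have m1 : gks • As + As - j0 P1 ∈ fK.range := by
    rw [← QuotientAddGroup.eq_zero_iff]
    have e := ha gks gks
    rw [mul_ss] at e
    have e2 : gks • a gks + a gks = jmap (f2 gks gks + f2 1 1) := by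
      rw [map_add, ← hA1, e]; abel
    rw [← hAs, ← hP1, jmap_mk, TK_smul_mk] at e2
    rw [QuotientAddGroup.mk_sub, QuotientAddGroup.mk_add, e2, sub_self]
  obtain ⟨W1, hW1⟩ := m1
  have H1 : gks • As + As = j0 P1 + fK W1 := by rw [hW1]; abel
  have m2 : gkt • At + At - j0 P2 ∈ fK.range := by
    rw [← QuotientAddGroup.eq_zero_iff]
    have e := ha gkt gkt
    rw [mul_tt] at e
    have e2 : gkt • a gkt + a gkt = jmap (f2 gkt gkt + f2 1 1) := by
      rw [map_add, ← hA1, e]; abel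
    rw [← hAt, ← hP2, jmap_mk, TK_smul_mk] at e2
    rw [QuotientAddGroup.mk_sub, QuotientAddGroup.mk_add, e2, sub_self]
  obtain ⟨W2, hW2⟩ := m2
  have H2 : gkt • At + At = j0 P2 + fK W2 := by rw [hW2]; abel
  have m3 : gks • At + As - (gkt • As + At) - j0 P3 ∈ fK.range := by
    rw [← QuotientAddGroup.eq_zero_iff]
    have e1 := ha gks gkt
    rw [mul_st] at e1
    have e2 := ha gkt gks
    rw [mul_ts] at e2
    have e3 : gks • a gkt + a gks - (gkt • a gks + a gkt)
        = jmap (f2 gks gkt - f2 gkt gks) := by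
      rw [map_sub, e1, e2]; abel
    rw [← hAs, ← hAt, ← hP3, jmap_mk, TK_smul_mk, TK_smul_mk] at e3
    rw [QuotientAddGroup.mk_sub, QuotientAddGroup.mk_sub, QuotientAddGroup.mk_add,
      QuotientAddGroup.mk_add, e3, sub_self]
  obtain ⟨W3, hW3⟩ := m3
  have H3 : gks • At + As = gkt • As + At + j0 P3 + fK W3 := by rw [hW3]; abel
  obtain ⟨q, σs, σt, ωs, ωt, G1, G2⟩ := certify As At P1 P2 P3 W1 W2 W3 H1 H2 H3
  have hw0s : (QuotientAddGroup.mk (fK ωs) : TK) = 0 :=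
    (QuotientAddGroup.eq_zero_iff _).mpr ⟨ωs, rfl⟩
  have hw0t : (QuotientAddGroup.mk (fK ωt) : TK) = 0 :=
    (QuotientAddGroup.eq_zero_iff _).mpr ⟨ωt, rfl⟩
  set mq : TK := QuotientAddGroup.mk q with hmq
  have keyS : a gks = (gks • mq - mq) + jmap (QuotientAddGroup.mk σs) := by
    rw [← hAs, G1, jmap_mk, QuotientAddGroup.mk_add, QuotientAddGroup.mk_add,
      QuotientAddGroup.mk_sub, hw0s, add_zero, hmq, TK_smul_mk]
  have keyT : a gkt = (gkt • mq - mq) + jmap (QuotientAddGroup.mk σt) := by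
    rw [← hAt, G2, jmap_mk, QuotientAddGroup.mk_add, QuotientAddGroup.mk_add,
      QuotientAddGroup.mk_sub, hw0t, add_zero, hmq, TK_smul_mk]
  have keyU : a gku = (gku • mq - mq)
      + jmap (gks • QuotientAddGroup.mk σt + QuotientAddGroup.mk σs - f2 gks gkt) := by
    have e1 := ha gks gkt
    rw [mul_st] at e1
    have e : a gku = gks • a gkt + a gks - jmap (f2 gks gkt) := by rw [e1]; abel
    rw [e, keyT, keyS, map_sub, map_add, jmap_smul, smul_add, smul_sub, ← mul_smul, mul_st]
    abel
  set βf : KG → TT KG := fun g =>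
    if g = 1 then f2 1 1 else if g = gks then QuotientAddGroup.mk σs
    else if g = gkt then QuotientAddGroup.mk σt
    else gks • QuotientAddGroup.mk σt + QuotientAddGroup.mk σs - f2 gks gkt with hβf
  have βf1 : βf 1 = f2 1 1 := by simp only [hβf]; simp
  have βfs : βf gks = QuotientAddGroup.mk σs := by
    simp only [hβf]; simp [show (gks : KG) ≠ 1 by decide]
  have βft : βf gkt = QuotientAddGroup.mk σt := by
    simp only [hβf]
    simp [show (gkt : KG) ≠ 1 by decide, show gkt ≠ gks by decide]
  have βfu : βf gku
      = gks • QuotientAddGroup.mk σt + QuotientAddGroup.mk σs - f2 gks gkt := by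
    simp only [hβf]
    simp [show (gku : KG) ≠ 1 by decide, show gku ≠ gks by decide,
      show gku ≠ gkt by decide]
  have key : ∀ g : KG, a g = (g • mq - mq) + jmap (βf g) := by
    intro g
    rcases enumKG g with rfl | rfl | rfl | rfl
    · rw [βf1, one_smul, sub_self, zero_add]; exact hA1
    · rw [βfs]; exact keyS
    · rw [βft]; exact keyT
    · rw [βfu]; exact keyU
  refine ⟨βf, ?_⟩
  intro g h'
  apply jmap_injective
  show jmap (f2 g h') = jmap (g • βf h' - βf (g * h') + βf g)
  rw [ha g h', map_add, map_sub, jmap_smul, key h', key (g * h'), key g,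
    smul_add, smul_sub, ← mul_smul]
  abel


end Normic
end

section
/- There exists a ∈ C' such that 2·c_χ(τ) = τ·a − a for every τ ∈ Q; in other words, twice the class of the 1-cocycle c_χ in H¹(Q, C') is zero. -/
/-- ℚ/ℤ as an additive group. -/
noncomputable abbrev QZ : Type := AddCircle (1 : ℚ)

/-- Let `Q, H` be finite groups, `l, e'` positive integers with `e' ∣ l·|Q|`,
and let `A = Hom(H, ℚ/ℤ)` with trivial `Q`-action.  For any homomorphism `χ : Q → A`, the
1-cocycle `c_χ : Q → M` (where `M = Q → A` with the left translation action
`(τ • f) σ = f (τ⁻¹σ)`) given by `c_χ τ = (constant function χ τ)` satisfies: twice `c_χ`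
is the coboundary of some element `a` of the submodule
`C' = {f : Q → A | ∀ h ∈ H with h^{e'} = 1, l·Σ_{σ∈Q} f(σ)(h) = 0}`.
(Here `A` is written multiplicatively, so `2·x` is `x^2` and `τ·a − a` is `(τ•a) * a⁻¹`.) -/
theorem stmt6 (Q H : Type*) [Group Q] [Finite Q] [Group H] [Finite H]
    (l e' : ℕ) (hl : 0 < l) (he' : 0 < e') (hdvd : e' ∣ l * Nat.card Q)
    (χ : Q →* (H →* Multiplicative QZ)) :
    ∃ a : Q → (H →* Multiplicative QZ),
      (∀ h : H, h ^ e' = 1 → l • ∑ᶠ σ : Q, Multiplicative.toAdd (a σ h) = 0) ∧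
      ∀ τ σ : Q, (χ τ) ^ 2 = a (τ⁻¹ * σ) * (a σ)⁻¹ := by
  classical
  cases nonempty_fintype Q
  refine ⟨fun σ => ((χ σ) ^ 2)⁻¹, ?_, ?_⟩
  · intro h _
    set f : Q → QZ := fun σ => Multiplicative.toAdd (χ σ h) with hf
    have h2 : ∀ σ : Q, f σ⁻¹ = - f σ := by
      intro σ; simp [hf]
    have h1 : ∑ σ : Q, f σ = ∑ σ : Q, f σ⁻¹ :=
      (Fintype.sum_equiv (Equiv.inv Q) _ _ (fun σ => rfl)).symm
    have hS : (∑ σ : Q, f σ) + (∑ σ : Q, f σ) = 0 := by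
      nth_rewrite 2 [h1]
      simp [h2]
    have hz : ∑ᶠ σ : Q, Multiplicative.toAdd (((χ σ) ^ 2)⁻¹ h) = 0 := by
      rw [finsum_eq_sum_of_fintype]
      have key : ∀ σ : Q, Multiplicative.toAdd (((χ σ) ^ 2)⁻¹ h) = -(f σ + f σ) := by
        intro σ; simp [hf, pow_two]
      simp only [key]
      have : ∑ x : Q, -(f x + f x) = -((∑ x : Q, f x) + (∑ x : Q, f x)) := by
        rw [← Finset.sum_add_distrib, Finset.sum_neg_distrib]
      rw [this, hS, neg_zero]
    rw [hz, smul_zero]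
  · intro τ σ
    ext h
    simp only [MonoidHom.mul_apply, MonoidHom.inv_apply, MonoidHom.pow_apply, map_mul, map_inv]
    apply Multiplicative.toAdd.injective
    simp only [toAdd_mul, toAdd_inv, toAdd_pow]
    abel
end

section
/- Let r be the order of χ as an element of the group Hom(Q, A) (r divides |Q|), and for h ∈ H let χ_h : Q → ℚ/ℤ denote the homomorphism σ ↦ χ(σ)(h). If r is odd, or if for every h ∈ H with h^{e'} = 1 the integer l·#ker(χ_h) is even, then there exists a ∈ C' such that c_χ(τ) = τ·a − a for every τ ∈ Q; in other words, the class of c_χ in H¹(Q, C') is zero. -/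
/-- Twice the sum of all values of a homomorphism into `ℚ/ℤ` is zero. -/
lemma aux_two_nsmul_sum {Q : Type*} [Group Q] [Fintype Q]
    (φ : Q →* Multiplicative QZ) :
    2 • ∑ σ : Q, Multiplicative.toAdd (φ σ) = 0 := by
  have h : (∑ σ : Q, Multiplicative.toAdd (φ σ))
      = -∑ σ : Q, Multiplicative.toAdd (φ σ) := by
    rw [← Finset.sum_neg_distrib]
    exact Fintype.sum_equiv (Equiv.inv Q) _ _ (fun σ => by simp)
  rw [two_nsmul]
  nth_rewrite 2 [h]
  exact add_neg_cancel _

open Finset in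
/-- Twice the sum over the image of a homomorphism into `ℚ/ℤ` is zero. -/
lemma aux_two_nsmul_image_sum {Q : Type*} [Group Q] [Fintype Q] [DecidableEq QZ]
    (φ : Q →* Multiplicative QZ) :
    2 • ∑ b ∈ Finset.univ.image (fun σ => Multiplicative.toAdd (φ σ)), b = 0 := by
  have h : (∑ b ∈ Finset.univ.image (fun σ => Multiplicative.toAdd (φ σ)), b)
      = -∑ b ∈ Finset.univ.image (fun σ => Multiplicative.toAdd (φ σ)), b := by
    rw [← Finset.sum_neg_distrib]
    refine Finset.sum_nbij' (fun b => -b) (fun b => -b) ?_ ?_ (by simp) (by simp)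
      (fun b _ => (neg_neg b).symm)
    · intro b hb
      obtain ⟨σ, -, hσ⟩ := Finset.mem_image.mp hb
      exact Finset.mem_image.mpr ⟨σ⁻¹, Finset.mem_univ _, by simp [← hσ]⟩
    · intro b hb
      obtain ⟨σ, -, hσ⟩ := Finset.mem_image.mp hb
      exact Finset.mem_image.mpr ⟨σ⁻¹, Finset.mem_univ _, by simp [← hσ]⟩
  rw [two_nsmul]
  nth_rewrite 2 [h]
  exact add_neg_cancel _

open Finset in
/-- Each fiber over an image point has the cardinality of the kernel. -/
lemma aux_fiber_card {Q : Type*} [Group Q] [Fintype Q] [DecidableEq QZ]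
    (φ : Q →* Multiplicative QZ) (b : QZ)
    (hb : b ∈ Finset.univ.image (fun σ => Multiplicative.toAdd (φ σ))) :
    #{σ ∈ (Finset.univ : Finset Q) | Multiplicative.toAdd (φ σ) = b}
      = Nat.card {σ : Q // φ σ = 1} := by
  obtain ⟨σ₀, -, hσ₀⟩ := Finset.mem_image.mp hb
  rw [Nat.card_eq_fintype_card, Fintype.card_subtype]
  refine Finset.card_nbij' (fun σ => σ₀⁻¹ * σ) (fun σ => σ₀ * σ) ?_ ?_
    (by intro a _; simp) (by intro a _; simp)
  · intro σ hσ
    simp only [Finset.mem_coe, Finset.mem_filter, Finset.mem_univ, true_and] at hσ ⊢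
    have : Multiplicative.toAdd (φ (σ₀⁻¹ * σ)) = 0 := by
      simp [map_mul, hσ, ← hσ₀]
    rwa [← toAdd_one, Multiplicative.toAdd.injective.eq_iff] at this
  · intro σ hσ
    simp only [Finset.mem_coe, Finset.mem_filter, Finset.mem_univ, true_and] at hσ ⊢
    simp [map_mul, hσ, hσ₀]

/-- Key lemma: under either hypothesis, `l` times the sum of the values of a homomorphism
`Q → ℚ/ℤ` vanishes. -/
lemma aux_key {Q : Type*} [Group Q] [Fintype Q]
    (φ : Q →* Multiplicative QZ) (l r : ℕ) (hr : ∀ σ, (φ σ) ^ r = 1)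
    (hyp : Odd r ∨ Even (l * Nat.card {σ : Q // φ σ = 1})) :
    l • ∑ σ : Q, Multiplicative.toAdd (φ σ) = 0 := by
  classical
  set S := ∑ σ : Q, Multiplicative.toAdd (φ σ) with hS
  have h2S : 2 • S = 0 := aux_two_nsmul_sum φ
  rcases hyp with hodd | heven
  · -- r odd : r • S = 0 and 2 • S = 0 force S = 0
    have hrS : r • S = 0 := by
      rw [Finset.smul_sum]
      refine Finset.sum_eq_zero fun σ _ => ?_
      rw [← toAdd_pow, hr σ, toAdd_one]
    obtain ⟨m, hm⟩ := hodd
    have : S = 0 := by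
      have : (2 * m + 1) • S = 0 := by rwa [← hm]
      rw [add_nsmul, one_nsmul, mul_comm, mul_nsmul, smul_comm, h2S, smul_zero,
        zero_add] at this
      exact this
    rw [this, smul_zero]
  · -- l * #ker even
    set κ := Nat.card {σ : Q // φ σ = 1} with hκ
    set T := ∑ b ∈ Finset.univ.image (fun σ => Multiplicative.toAdd (φ σ)), b with hT
    have h2T : 2 • T = 0 := aux_two_nsmul_image_sum φ
    have hcomp := Finset.sum_comp (s := (Finset.univ : Finset Q))
      (fun b : QZ => b) (fun σ => Multiplicative.toAdd (φ σ))
    have hSκT : S = κ • T := by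
      rw [hS, hcomp, hT, Finset.smul_sum]
      exact Finset.sum_congr rfl fun b hb => by rw [aux_fiber_card φ b hb]
    obtain ⟨m, hm⟩ := heven
    have hlκ : l * κ = 2 * m := by omega
    rw [hSκT, smul_smul, hlκ, mul_nsmul, h2T, smul_zero]

/-- Let `Q, H` be finite groups, `l, e'` positive integers with `e' ∣ l·|Q|`,
`A = Hom(H, ℚ/ℤ)` with trivial `Q`-action, and `χ : Q → A` a homomorphism of order `r`.
For `h ∈ H` let `χ_h : Q → ℚ/ℤ` be `σ ↦ χ(σ)(h)`.  If `r` is odd, or if for every `h ∈ H`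
with `h^{e'} = 1` the integer `l·#ker(χ_h)` is even, then the 1-cocycle
`c_χ : τ ↦ (constant function χ τ)` on `M = Q → A` (left translation action) is the
coboundary of some element `a` of
`C' = {f : Q → A | ∀ h ∈ H with h^{e'} = 1, l·Σ_{σ∈Q} f(σ)(h) = 0}`.
(Here `A` is written multiplicatively, so `τ·a − a` is `(τ•a) * a⁻¹`.) -/
theorem stmt7 (Q H : Type*) [Group Q] [Finite Q] [Group H] [Finite H]
    (l e' : ℕ) (hl : 0 < l) (he' : 0 < e') (hdvd : e' ∣ l * Nat.card Q)
    (χ : Q →* (H →* Multiplicative QZ))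
    (hyp : Odd (orderOf χ) ∨
      ∀ h : H, h ^ e' = 1 → Even (l * Nat.card {σ : Q // χ σ h = 1})) :
    ∃ a : Q → (H →* Multiplicative QZ),
      (∀ h : H, h ^ e' = 1 → l • ∑ᶠ σ : Q, Multiplicative.toAdd (a σ h) = 0) ∧
      ∀ τ σ : Q, χ τ = a (τ⁻¹ * σ) * (a σ)⁻¹ := by
  letI : Fintype Q := Fintype.ofFinite Q
  refine ⟨fun σ => (χ σ)⁻¹, ?_, ?_⟩
  · intro h hh
    -- the homomorphism σ ↦ χ σ h
    let φ : Q →* Multiplicative QZ :=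
      (MonoidHom.eval h).comp χ
    have hφ : ∀ σ, φ σ = χ σ h := fun σ => rfl
    have key : l • ∑ σ : Q, Multiplicative.toAdd (φ σ) = 0 := by
      refine aux_key φ l (orderOf χ) (fun σ => ?_) ?_
      · have := pow_orderOf_eq_one χ
        calc (φ σ) ^ orderOf χ = ((χ ^ orderOf χ) σ) h := rfl
        _ = 1 := by rw [this]; rfl
      · rcases hyp with h1 | h2
        · exact Or.inl h1
        · exact Or.inr (by simpa [hφ] using h2 h hh)
    have : ∑ᶠ σ : Q, Multiplicative.toAdd (((χ σ)⁻¹ : H →* Multiplicative QZ) h)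
        = -∑ σ : Q, Multiplicative.toAdd (φ σ) := by
      rw [finsum_eq_sum_of_fintype, ← Finset.sum_neg_distrib]
      exact Finset.sum_congr rfl fun σ _ => by simp [hφ]
    rw [this, smul_neg, key, neg_zero]
  · intro τ σ
    have h1 : χ (τ⁻¹ * σ) = (χ τ)⁻¹ * χ σ := by rw [map_mul, map_inv]
    show χ τ = (χ (τ⁻¹ * σ))⁻¹ * ((χ σ)⁻¹)⁻¹
    rw [h1, mul_inv_rev, inv_inv, inv_inv, mul_assoc, mul_comm (χ τ) (χ σ),
      ← mul_assoc, inv_mul_cancel, one_mul]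
end

section
/- Let χ : Q → A be a homomorphism such that χ(γ) has order exactly 2^s. Then the 1-cocycle c : Q → Θ defined by c(τ)(σ) = χ(τ) (a constant function of σ, which indeed lies in Θ) is not a coboundary: there exists no a ∈ Θ with c(τ) = τ·a − a for all τ ∈ Q. Equivalently, the class of c in H¹(Q, Θ) is nonzero. -/
/-- Let `s ≥ 1`, let `Q` be cyclic of order `2^s` with generator `γ`, and let
`A` be an abelian group with `2^s·A = 0`, regarded with the trivial `Q`-action.  Let
`Θ = {f : Q → A | Σ_{σ∈Q} f(σ) = 0}`, a `Q`-submodule of the module of functions `Q → A`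
with the left translation action `(τ • f) σ = f (τ⁻¹σ)`.  If `χ : Q → A` is a homomorphism
with `χ(γ)` of order exactly `2^s`, then the 1-cocycle `c : τ ↦ (constant function χ τ)`
with values in `Θ` is not a coboundary: there is no `a ∈ Θ` with `c τ = τ·a − a` for all
`τ ∈ Q`. -/
theorem stmt8 (s : ℕ) (hs : 1 ≤ s) (Q : Type*) [Group Q] (γ : Q)
    (hgen : ∀ x : Q, x ∈ Subgroup.zpowers γ) (hcard : Nat.card Q = 2 ^ s)
    (A : Type*) [AddCommGroup A] (hA : ∀ a : A, 2 ^ s • a = 0)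
    (χ : Q →* Multiplicative A)
    (hχγ : addOrderOf (Multiplicative.toAdd (χ γ)) = 2 ^ s) :
    ¬ ∃ a : Q → A, (∑ᶠ σ : Q, a σ = 0) ∧
        ∀ τ σ : Q, Multiplicative.toAdd (χ τ) = a (τ⁻¹ * σ) - a σ := by
  rintro ⟨a, hsum, h⟩
  set N := 2 ^ s with hN
  have hNpos : 0 < N := Nat.pow_pos (by norm_num)
  have hfin : Finite Q := Nat.finite_of_card_ne_zero (by omega)
  have : Fintype Q := Fintype.ofFinite Q
  set x := Multiplicative.toAdd (χ γ) with hx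
  -- order of γ is N
  have hzpow : Subgroup.zpowers γ = ⊤ := by
    ext y; simp [hgen y]
  have horder : orderOf γ = N := by
    rw [← Nat.card_zpowers, hzpow, ← hcard]
    exact Nat.card_congr Subgroup.topEquiv.toEquiv
  -- a (γ⁻¹ ^ k) = a 1 + k • x
  have key : ∀ k : ℕ, a (γ⁻¹ ^ k) = a 1 + k • x := by
    intro k
    have := h (γ ^ k) 1
    rw [mul_one, ← inv_pow] at this
    have hpow : Multiplicative.toAdd (χ (γ ^ k)) = k • x := by
      rw [map_pow]; simp [hx]
    rw [hpow] at this
    rw [eq_sub_iff_add_eq] at this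
    rw [← this]; abel
  -- bijectivity of k ↦ γ⁻¹ ^ k on Fin N
  have hordinv : orderOf γ⁻¹ = N := by rw [orderOf_inv, horder]
  have hbij : Function.Bijective (fun k : Fin N => γ⁻¹ ^ (k : ℕ)) := by
    have hinj : Function.Injective (fun k : Fin N => γ⁻¹ ^ (k : ℕ)) := by
      intro i j hij
      have := pow_injOn_Iio_orderOf (x := γ⁻¹)
        (by simpa [hordinv] using i.isLt) (by simpa [hordinv] using j.isLt) hij
      exact Fin.ext this
    have hc : Fintype.card (Fin N) = Fintype.card Q := by
      simp [Nat.card_eq_fintype_card] at hcard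
      simp [hcard]
    exact (Fintype.bijective_iff_injective_and_card _).2 ⟨hinj, hc⟩
  -- compute the sum
  have hsum' : ∑ σ : Q, a σ = 0 := by
    rw [← finsum_eq_sum_of_fintype]; exact hsum
  have hsum2 : ∑ k : Fin N, a (γ⁻¹ ^ (k : ℕ)) = 0 := by
    rw [Fintype.sum_bijective _ hbij _ a (fun k => rfl)]
    exact hsum'
  have hsum3 : (N • a 1) + (∑ k : Fin N, (k : ℕ)) • x = 0 := by
    rw [← hsum2]
    simp only [key]
    rw [Finset.sum_add_distrib, Finset.sum_const, Finset.card_univ, Fintype.card_fin,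
      Finset.sum_smul]
  have hNa : N • a 1 = 0 := hA (a 1)
  rw [hNa, zero_add] at hsum3
  -- now ∑ k < N, k = 2^(s-1) * (2^s - 1)
  have hsumk : (∑ k : Fin N, (k : ℕ)) = 2 ^ (s - 1) * (2 ^ s - 1) := by
    rw [Fin.sum_univ_eq_sum_range (fun i => i) N]
    have h2 : (∑ k ∈ Finset.range N, k) * 2 = N * (N - 1) := Finset.sum_range_id_mul_two N
    have e1 : 2 ^ (s - 1) * 2 = 2 ^ s := by
      rw [← pow_succ]
      congr 1
      omega
    have hgoal2 : 2 ^ (s - 1) * (2 ^ s - 1) * 2 = N * (N - 1) := by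
      calc 2 ^ (s - 1) * (2 ^ s - 1) * 2 = 2 ^ (s - 1) * 2 * (2 ^ s - 1) := by ring
        _ = N * (N - 1) := by rw [e1, hN]
    omega
  rw [hsumk] at hsum3
  have hdvd : N ∣ 2 ^ (s - 1) * (2 ^ s - 1) := by
    rw [← hχγ]
    exact addOrderOf_dvd_of_nsmul_eq_zero hsum3
  -- contradiction
  have hcop : Nat.Coprime N (2 ^ s - 1) := by
    have : (2 ^ s - 1) + 1 = N := by omega
    rw [← this]
    simp [Nat.Coprime]
  have hdvd2 : N ∣ 2 ^ (s - 1) := hcop.dvd_of_dvd_mul_right hdvd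
  have hle : N ≤ 2 ^ (s - 1) := Nat.le_of_dvd (Nat.pow_pos (by norm_num)) hdvd2
  have : 2 ^ (s - 1) < 2 ^ s := Nat.pow_lt_pow_right (by norm_num) (by omega)
  omega
end
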